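/- arXiv:1211.4673 — 8 statements merged into one kernel-verified Lean document; each statement's English description precedes it below -/
import Mathlib

section
/- Let n, d, r be positive integers with gcd(r,d) = 1. Then the number of y with 1 ≤ y ≤ n and gcd(dy + r, n) = 1 equals n · ∏_{p prime, p ∣ n, p ∤ d} (1 − 1/p). -/
open Finset

/-- Counting a periodic predicate over `range (k * m)`. -/
lemma aux_periodic_count (Q : ℕ → Prop) [DecidablePred Q] (m : ℕ)
    (hQ : ∀ y, Q (y + m) ↔ Q y) (k : ℕ) :
    ((Finset.range (k * m)).filter Q).card = k * ((Finset.range m).filter Q).card := by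
  induction k with
  | zero => simp
  | succ k ih =>
    have hshift : ∀ a y, Q (a * m + y) ↔ Q y := by
      intro a
      induction a with
      | zero => intro y; simp
      | succ a iha =>
        intro y
        have he : (a + 1) * m + y = a * m + y + m := by ring
        rw [he, hQ, iha]
    rw [Nat.succ_mul, Finset.range_add_eq_union, Finset.filter_union,
      Finset.card_union_of_disjoint, Finset.filter_map, Finset.card_map]
    · have heq : Finset.filter (Q ∘ addLeftEmbedding (k * m)) (Finset.range m)
          = Finset.filter Q (Finset.range m) := by
        apply Finset.filter_congr
        intro y _
        simp only [Function.comp_apply, addLeftEmbedding_apply]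
        simp [hshift k y]
      rw [heq, ih]
      ring
    · rw [Finset.disjoint_left]
      intro a ha hb
      simp only [Finset.mem_filter, Finset.mem_range] at ha
      rw [Finset.filter_map] at hb
      simp only [Finset.mem_map, addLeftEmbedding_apply] at hb
      obtain ⟨b, _, hb'⟩ := hb
      omega

/-- The number of `y ∈ range m` with `d*y + c` coprime to `m`, when `gcd d m = 1`. -/
lemma aux_count_ap (m d c : ℕ) (hm : 0 < m) (hdm : Nat.Coprime d m) :
    ((Finset.range m).filter (fun y => Nat.gcd (d * y + c) m = 1)).card = Nat.totient m := by
  haveI : NeZero m := ⟨hm.ne'⟩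
  have hdu : IsUnit ((d : ZMod m)) := (ZMod.isUnit_iff_coprime d m).mpr hdm
  rw [Nat.totient_eq_card_coprime]
  apply Finset.card_bij (fun y _ => (d * y + c) % m)
  · intro y hy
    simp only [Finset.mem_filter, Finset.mem_range] at hy ⊢
    refine ⟨Nat.mod_lt _ hm, ?_⟩
    rw [Nat.coprime_comm]
    have : IsUnit (((d * y + c) % m : ℕ) : ZMod m) := by
      rw [ZMod.natCast_mod]
      exact (ZMod.isUnit_iff_coprime _ m).mpr hy.2
    exact (ZMod.isUnit_iff_coprime _ m).mp this
  · intro y1 h1 y2 h2 heq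
    simp only [Finset.mem_filter, Finset.mem_range] at h1 h2
    have hc : ((d * y1 + c : ℕ) : ZMod m) = ((d * y2 + c : ℕ) : ZMod m) := by
      rw [← ZMod.natCast_mod, heq, ZMod.natCast_mod]
    push_cast at hc
    have h3 : (d : ZMod m) * y1 = (d : ZMod m) * y2 := add_right_cancel hc
    have h4 : (y1 : ZMod m) = y2 := hdu.mul_left_cancel h3
    have h5 := congrArg ZMod.val h4
    rwa [ZMod.val_cast_of_lt h1.1, ZMod.val_cast_of_lt h2.1] at h5
  · intro z hz
    simp only [Finset.mem_filter, Finset.mem_range] at hz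
    obtain ⟨hzlt, hzcop⟩ := hz
    obtain ⟨u, hu⟩ := hdu
    set y : ℕ := (((u⁻¹ : (ZMod m)ˣ) : ZMod m) * ((z : ZMod m) - c)).val with hy
    have hcast : ((d * y + c : ℕ) : ZMod m) = (z : ZMod m) := by
      push_cast
      rw [hy, ZMod.natCast_rightInverse _, ← hu, Units.mul_inv_cancel_left,
        sub_add_cancel]
    refine ⟨y, ?_, ?_⟩
    · simp only [Finset.mem_filter, Finset.mem_range]
      refine ⟨ZMod.val_lt _, ?_⟩
      have : IsUnit ((d * y + c : ℕ) : ZMod m) := by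
        rw [hcast]
        exact (ZMod.isUnit_iff_coprime _ m).mpr (Nat.coprime_comm.mp hzcop)
      exact (ZMod.isUnit_iff_coprime _ m).mp this
    · have := congrArg ZMod.val hcast
      rwa [ZMod.val_natCast, ZMod.val_cast_of_lt hzlt] at this

/-- prime factors of a product of prime powers. -/
lemma aux_primeFactors_prod_pow (s : Finset ℕ) (f : ℕ → ℕ)
    (hp : ∀ p ∈ s, Nat.Prime p) (hf : ∀ p ∈ s, f p ≠ 0) :
    (∏ p ∈ s, p ^ f p).primeFactors = s := by
  induction s using Finset.induction_on with
  | empty => simp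
  | @insert p s' hpnotin ih =>
    rw [Finset.prod_insert hpnotin]
    have hp' : Nat.Prime p := hp p (Finset.mem_insert_self _ _)
    have hprodne : (∏ q ∈ s', q ^ f q) ≠ 0 :=
      Finset.prod_ne_zero_iff.mpr fun q hq =>
        pow_ne_zero _ (hp q (Finset.mem_insert_of_mem hq)).pos.ne'
    rw [Nat.primeFactors_mul (pow_ne_zero _ hp'.pos.ne') hprodne,
      Nat.primeFactors_pow _ (hf p (Finset.mem_insert_self _ _)), hp'.primeFactors,
      ih (fun q hq => hp q (Finset.mem_insert_of_mem hq))
        (fun q hq => hf q (Finset.mem_insert_of_mem hq))]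
    rw [Finset.insert_eq]

theorem stmt_2 (n d r : ℕ) (hn : 0 < n) (hd : 0 < d) (hr : 0 < r)
    (h : Nat.gcd r d = 1) :
    (((Finset.Icc 1 n).filter (fun y => Nat.gcd (d * y + r) n = 1)).card : ℚ) =
      (n : ℚ) * ∏ p ∈ n.primeFactors.filter (fun p => ¬ p ∣ d), (1 - 1 / (p : ℚ)) := by
  classical
  set s : Finset ℕ := n.primeFactors.filter (fun p => ¬ p ∣ d) with hs
  set m : ℕ := ∏ p ∈ s, p ^ n.factorization p with hmdef
  set w : ℕ := ∏ p ∈ n.primeFactors.filter (fun p => p ∣ d), p ^ n.factorization p with hwdef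
  have hsprime : ∀ p ∈ s, Nat.Prime p := fun p hp =>
    Nat.prime_of_mem_primeFactors (Finset.mem_filter.mp hp).1
  have hsfact : ∀ p ∈ s, n.factorization p ≠ 0 := by
    intro p hp
    have := (Finset.mem_filter.mp hp).1
    rw [← Nat.support_factorization] at this
    exact Finsupp.mem_support_iff.mp this
  have hmpos : 0 < m :=
    Finset.prod_pos fun p hp => pow_pos (hsprime p hp).pos _
  have hn_eq : w * m = n := by
    rw [hwdef, hmdef, hs, Finset.prod_filter_mul_prod_filter_not]
    rw [← Nat.support_factorization]
    exact Nat.factorization_prod_pow_eq_self hn.ne'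
  have hwpos : 0 < w := by
    rcases Nat.eq_zero_or_pos w with h0 | h0
    · rw [h0, zero_mul] at hn_eq; omega
    · exact h0
  -- d is coprime to m
  have hdm : Nat.Coprime d m := by
    rw [hmdef]
    apply Nat.Coprime.prod_right
    intro p hp
    exact (((hsprime p hp).coprime_iff_not_dvd).mpr (Finset.mem_filter.mp hp).2).symm.pow_right _
  -- gcd with n equals gcd with m
  have hcond : ∀ y, Nat.gcd (d * y + r) n = 1 ↔ Nat.gcd (d * y + r) m = 1 := by
    intro y
    have hcw : Nat.Coprime (d * y + r) w := by
      rw [hwdef]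
      apply Nat.Coprime.prod_right
      intro p hp
      have hpmem := Finset.mem_filter.mp hp
      have hpp : Nat.Prime p := Nat.prime_of_mem_primeFactors hpmem.1
      have hnd : ¬ p ∣ (d * y + r) := by
        intro hdvd
        have hpr : p ∣ r := (Nat.dvd_add_right (Dvd.dvd.mul_right hpmem.2 y)).mp hdvd
        have : p ∣ Nat.gcd r d := Nat.dvd_gcd hpr hpmem.2
        rw [h] at this
        exact hpp.ne_one (Nat.dvd_one.mp this)
      exact ((hpp.coprime_iff_not_dvd).mpr hnd).symm.pow_right _
    constructor
    · intro hy
      have : Nat.Coprime (d * y + r) n := hy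
      have hmdvd : m ∣ n := ⟨w, by rw [← hn_eq]; ring⟩
      exact Nat.Coprime.coprime_dvd_right hmdvd this
    · intro hy
      have : Nat.Coprime (d * y + r) (w * m) := Nat.Coprime.mul_right hcw hy
      rw [hn_eq] at this
      exact this
  -- rewrite the filter condition
  have hfilter : (Finset.Icc 1 n).filter (fun y => Nat.gcd (d * y + r) n = 1)
      = (Finset.Icc 1 n).filter (fun y => Nat.gcd (d * y + r) m = 1) := by
    apply Finset.filter_congr
    intro y _
    simp [hcond y]
  rw [hfilter]
  -- re-index Icc 1 n as range n shifted by 1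
  have hIcc : Finset.Icc 1 n = (Finset.range n).map (addLeftEmbedding 1) := by
    rw [Finset.range_eq_Ico, Finset.map_add_left_Ico, ← Finset.Ico_add_one_right_eq_Icc]
    congr 1 <;> omega
  rw [hIcc, Finset.filter_map, Finset.card_map]
  have hQcongr : Finset.filter ((fun y => Nat.gcd (d * y + r) m = 1) ∘ addLeftEmbedding 1)
        (Finset.range n)
      = Finset.filter (fun y => Nat.gcd (d * y + (d + r)) m = 1) (Finset.range n) := by
    apply Finset.filter_congr
    intro y _
    simp only [Function.comp_apply, addLeftEmbedding_apply]
    have : d * (1 + y) + r = d * y + (d + r) := by ring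
    simp [this]
  rw [hQcongr]
  -- apply periodicity with n = w * m
  have hper : ∀ y, Nat.gcd (d * (y + m) + (d + r)) m = 1 ↔ Nat.gcd (d * y + (d + r)) m = 1 := by
    intro y
    have : d * (y + m) + (d + r) = (d * y + (d + r)) + d * m := by ring
    rw [this, Nat.gcd_add_mul_right_left]
  have hcount : (Finset.filter (fun y => Nat.gcd (d * y + (d + r)) m = 1)
      (Finset.range n)).card = w * Nat.totient m := by
    rw [← hn_eq, aux_periodic_count _ m hper w, aux_count_ap m d (d + r) hmpos hdm]
  rw [hcount]
  -- now the rational arithmetic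
  have hmfactors : m.primeFactors = s := aux_primeFactors_prod_pow s _ hsprime hsfact
  have htot : (Nat.totient m : ℚ) = (m : ℚ) * ∏ p ∈ s, (1 - 1 / (p : ℚ)) := by
    rw [Nat.totient_eq_mul_prod_factors, hmfactors]
    congr 1
    apply Finset.prod_congr rfl
    intro p _
    rw [one_div]
  push_cast
  rw [htot]
  have hwm : (w : ℚ) * m = n := by
    rw [← hn_eq]; push_cast; ring
  rw [← mul_assoc, hwm]
end

section
/- Let m and k be positive integers with k ∣ m. Then ∑_{d ∣ m} ∑_{e ∣ m, gcd(d,e) = k} (μ(d)/d)·(μ(e)/e) = (|μ(k)|/k²) · ∏_{p prime, p ∣ m, p ∤ k} (1 − 2/p). -/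
open Finset ArithmeticFunction


private lemma aux_double_powerset (P : Finset ℕ) (f : ℕ → ℚ) :
    (∑ S ∈ P.powerset, ∑ T ∈ P.powerset,
      if Disjoint S T then (∏ p ∈ S, f p) * ∏ p ∈ T, f p else 0) =
    ∏ p ∈ P, (1 + 2 * f p) := by
  classical
  induction P using Finset.induction_on with
  | empty => simp
  | @insert a P ha ih =>
    have key : ∀ S ∈ P.powerset, ∀ T ∈ P.powerset,
        (if Disjoint S (insert a T) then (∏ p ∈ S, f p) * ∏ p ∈ insert a T, f p else 0)
          = f a * (if Disjoint S T then (∏ p ∈ S, f p) * ∏ p ∈ T, f p else 0) := by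
      intro S hS T hT
      have haS : a ∉ S := fun h => ha (Finset.mem_powerset.mp hS h)
      have haT : a ∉ T := fun h => ha (Finset.mem_powerset.mp hT h)
      by_cases hd : Disjoint S T
      · simp only [Finset.disjoint_insert_right, Finset.prod_insert haT, hd, haS,
          not_false_eq_true, and_self, if_true]
        ring
      · simp [Finset.disjoint_insert_right, hd]
    have key2 : ∀ S ∈ P.powerset, ∀ T ∈ P.powerset,
        (if Disjoint (insert a S) T then (∏ p ∈ insert a S, f p) * ∏ p ∈ T, f p else 0)
          = f a * (if Disjoint S T then (∏ p ∈ S, f p) * ∏ p ∈ T, f p else 0) := by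
      intro S hS T hT
      have haS : a ∉ S := fun h => ha (Finset.mem_powerset.mp hS h)
      have haT : a ∉ T := fun h => ha (Finset.mem_powerset.mp hT h)
      by_cases hd : Disjoint S T
      · simp only [Finset.disjoint_insert_left, Finset.prod_insert haS, hd, haT,
          not_false_eq_true, and_self, if_true]
        ring
      · simp [Finset.disjoint_insert_left, hd]
    have key3 : ∀ S ∈ P.powerset, ∀ T ∈ P.powerset,
        (if Disjoint (insert a S) (insert a T) then
            (∏ p ∈ insert a S, f p) * ∏ p ∈ insert a T, f p else 0) = 0 := by
      intro S hS T hT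
      have : ¬ Disjoint (insert a S) (insert a T) := by
        exact Finset.not_disjoint_iff.mpr ⟨a, Finset.mem_insert_self a S, Finset.mem_insert_self a T⟩
      simp [this]
    rw [Finset.sum_powerset_insert ha]
    rw [show (∑ S ∈ P.powerset, ∑ T ∈ (insert a P).powerset,
        if Disjoint S T then (∏ p ∈ S, f p) * ∏ p ∈ T, f p else 0)
        = ∑ S ∈ P.powerset, ((∑ T ∈ P.powerset,
            if Disjoint S T then (∏ p ∈ S, f p) * ∏ p ∈ T, f p else 0)
          + ∑ T ∈ P.powerset,
            if Disjoint S (insert a T) then (∏ p ∈ S, f p) * ∏ p ∈ insert a T, f p else 0)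
      from Finset.sum_congr rfl fun S _ => Finset.sum_powerset_insert ha _]
    rw [show (∑ S ∈ P.powerset, ∑ T ∈ (insert a P).powerset,
        if Disjoint (insert a S) T then (∏ p ∈ insert a S, f p) * ∏ p ∈ T, f p else 0)
        = ∑ S ∈ P.powerset, ((∑ T ∈ P.powerset,
            if Disjoint (insert a S) T then (∏ p ∈ insert a S, f p) * ∏ p ∈ T, f p else 0)
          + ∑ T ∈ P.powerset,
            if Disjoint (insert a S) (insert a T) then
              (∏ p ∈ insert a S, f p) * ∏ p ∈ insert a T, f p else 0)
      from Finset.sum_congr rfl fun S _ => Finset.sum_powerset_insert ha _]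
    rw [Finset.sum_add_distrib, Finset.sum_add_distrib,
      Finset.sum_congr rfl (fun S hS => Finset.sum_congr rfl (key S hS)),
      Finset.sum_congr rfl (fun S hS => Finset.sum_congr rfl (key2 S hS)),
      Finset.sum_congr rfl (fun S hS => Finset.sum_congr rfl (key3 S hS))]
    simp only [← Finset.mul_sum, Finset.sum_const_zero, add_zero]
    rw [ih, Finset.prod_insert ha]
    ring


private lemma aux_sqf (S : Finset ℕ) (hS : ∀ p ∈ S, p.Prime) :
    Squarefree (∏ p ∈ S, p) := by
  classical
  induction S using Finset.induction_on with
  | empty => simp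
  | @insert a P ha ih =>
    rw [Finset.prod_insert ha]
    have hap : a.Prime := hS a (Finset.mem_insert_self a P)
    have hcop : Nat.Coprime a (∏ p ∈ P, p) := by
      rw [Nat.coprime_prod_right_iff]
      intro p hp
      exact (Nat.coprime_primes hap (hS p (Finset.mem_insert_of_mem hp))).mpr
        (fun h => ha (h ▸ hp))
    rw [Nat.squarefree_mul hcop]
    exact ⟨hap.squarefree, ih fun p hp => hS p (Finset.mem_insert_of_mem hp)⟩

private lemma aux_term (k : ℕ) (a : ℕ) (ha : Squarefree a) :
    (if Nat.Coprime a k then (moebius a : ℚ)/a else 0)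
      = ∏ p ∈ a.primeFactors, (if p ∣ k then 0 else -(1/(p:ℚ))) := by
  classical
  by_cases hak : Nat.Coprime a k
  · have hall : ∀ p ∈ a.primeFactors, ¬ p ∣ k := by
      intro p hp hpk
      have hpa : p ∣ a := Nat.dvd_of_mem_primeFactors hp
      have hp' : p.Prime := Nat.prime_of_mem_primeFactors hp
      exact hp'.one_lt.ne' (Nat.eq_one_of_dvd_coprimes hak hpa hpk)
    rw [if_pos hak, Finset.prod_congr rfl (fun p hp => if_neg (hall p hp))]
    rw [moebius_apply_of_squarefree ha]
    have h1 : ∀ p ∈ a.primeFactors, -(1/(p:ℚ)) = (-1)/(p:ℚ) := by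
      intro p _; ring
    rw [Finset.prod_congr rfl h1, Finset.prod_div_distrib, Finset.prod_const]
    rw [← Nat.cast_prod, Nat.prod_primeFactors_of_squarefree ha]
    have hcard : cardFactors a = a.primeFactors.card := by
      rw [← (cardDistinctFactors_eq_cardFactors_iff_squarefree ha.ne_zero).mpr ha,
        cardDistinctFactors_apply, Nat.primeFactors, List.card_toFinset]
    rw [hcard]
    push_cast
    ring
  · rw [if_neg hak]
    obtain ⟨p, hp, hpa, hpk⟩ := Nat.Prime.not_coprime_iff_dvd.mp hak
    refine (Finset.prod_eq_zero (i := p) ?_ ?_).symm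
    · exact Nat.mem_primeFactors.mpr ⟨hp, hpa, ha.ne_zero⟩
    · rw [if_pos hpk]
private lemma aux_W (n k : ℕ) (hn : 0 < n) :
    (∑ a ∈ n.divisors, ∑ b ∈ n.divisors,
      if Nat.gcd a b = 1 then
        (if Nat.Coprime a k then (moebius a : ℚ)/a else 0) *
        (if Nat.Coprime b k then (moebius b : ℚ)/b else 0) else 0)
    = ∏ p ∈ n.primeFactors.filter (fun p => ¬ p ∣ k), (1 - 2 / (p : ℚ)) := by
  classical
  set f : ℕ → ℚ := fun p => if p ∣ k then 0 else -(1/(p:ℚ)) with hf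
  set F : ℕ × ℕ → ℚ := fun x =>
    if Nat.gcd x.1 x.2 = 1 then
      (if Nat.Coprime x.1 k then (moebius x.1 : ℚ)/x.1 else 0) *
      (if Nat.Coprime x.2 k then (moebius x.2 : ℚ)/x.2 else 0) else 0 with hF
  rw [← Finset.sum_product' (f := fun a b => F (a, b))]
  have hsub : (n.divisors.filter Squarefree) ×ˢ (n.divisors.filter Squarefree)
      ⊆ n.divisors ×ˢ n.divisors :=
    Finset.product_subset_product (Finset.filter_subset _ _) (Finset.filter_subset _ _)
  have hzero : ∀ x ∈ n.divisors ×ˢ n.divisors,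
      x ∉ (n.divisors.filter Squarefree) ×ˢ (n.divisors.filter Squarefree) → F x = 0 := by
    rintro ⟨a, b⟩ hx hnx
    rw [Finset.mem_product] at hx
    rw [Finset.mem_product] at hnx
    have h : ¬ Squarefree a ∨ ¬ Squarefree b := by
      by_contra h
      push_neg at h
      exact hnx ⟨Finset.mem_filter.mpr ⟨hx.1, h.1⟩, Finset.mem_filter.mpr ⟨hx.2, h.2⟩⟩
    rcases h with h | h <;>
      · simp only [hF, moebius_eq_zero_of_not_squarefree h, Int.cast_zero, zero_div,
          zero_mul, mul_zero]
        split <;> simp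
  rw [← Finset.sum_subset hsub hzero]
  have key := aux_double_powerset n.primeFactors f
  rw [← Finset.sum_product' (f := fun S T =>
    if Disjoint S T then (∏ p ∈ S, f p) * ∏ p ∈ T, f p else 0)] at key
  rw [show (∑ x ∈ (n.divisors.filter Squarefree) ×ˢ (n.divisors.filter Squarefree), F x)
      = ∑ x ∈ n.primeFactors.powerset ×ˢ n.primeFactors.powerset,
          (if Disjoint x.1 x.2 then (∏ p ∈ x.1, f p) * ∏ p ∈ x.2, f p else 0) from ?_, key]
  · rw [Finset.prod_filter]
    refine Finset.prod_congr rfl fun p hp => ?_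
    have hp' : p.Prime := Nat.prime_of_mem_primeFactors hp
    by_cases hpk : p ∣ k
    · simp [hf, hpk]
    · simp only [hf, hpk, if_false, if_true, not_false_eq_true]
      ring
  · refine Finset.sum_nbij' (i := fun x => (Nat.primeFactors x.1, Nat.primeFactors x.2))
      (j := fun x => (∏ p ∈ x.1, p, ∏ p ∈ x.2, p)) ?_ ?_ ?_ ?_ ?_
    · rintro ⟨a, b⟩ hx
      rw [Finset.mem_product] at hx ⊢
      obtain ⟨ha, hb⟩ := hx
      rw [Finset.mem_filter, Nat.mem_divisors] at ha hb
      exact ⟨Finset.mem_powerset.mpr (Nat.primeFactors_mono ha.1.1 hn.ne'),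
        Finset.mem_powerset.mpr (Nat.primeFactors_mono hb.1.1 hn.ne')⟩
    · rintro ⟨S, T⟩ hx
      rw [Finset.mem_product] at hx ⊢
      obtain ⟨hS, hT⟩ := hx
      rw [Finset.mem_powerset] at hS hT
      have hSd : (∏ p ∈ S, p) ∣ n :=
        (Finset.prod_dvd_prod_of_subset _ _ _ hS).trans (Nat.prod_primeFactors_dvd n)
      have hTd : (∏ p ∈ T, p) ∣ n :=
        (Finset.prod_dvd_prod_of_subset _ _ _ hT).trans (Nat.prod_primeFactors_dvd n)
      constructor <;> rw [Finset.mem_filter, Nat.mem_divisors]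
      · exact ⟨⟨hSd, hn.ne'⟩, aux_sqf S fun p hp => Nat.prime_of_mem_primeFactors (hS hp)⟩
      · exact ⟨⟨hTd, hn.ne'⟩, aux_sqf T fun p hp => Nat.prime_of_mem_primeFactors (hT hp)⟩
    · rintro ⟨a, b⟩ hx
      rw [Finset.mem_product] at hx
      obtain ⟨ha, hb⟩ := hx
      rw [Finset.mem_filter] at ha hb
      simp only [Prod.mk.injEq]
      exact ⟨Nat.prod_primeFactors_of_squarefree ha.2, Nat.prod_primeFactors_of_squarefree hb.2⟩
    · rintro ⟨S, T⟩ hx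
      rw [Finset.mem_product] at hx
      obtain ⟨hS, hT⟩ := hx
      rw [Finset.mem_powerset] at hS hT
      simp only [Prod.mk.injEq]
      exact ⟨Nat.primeFactors_prod fun p hp => Nat.prime_of_mem_primeFactors (hS hp),
        Nat.primeFactors_prod fun p hp => Nat.prime_of_mem_primeFactors (hT hp)⟩
    · rintro ⟨a, b⟩ hx
      rw [Finset.mem_product] at hx
      obtain ⟨ha, hb⟩ := hx
      rw [Finset.mem_filter, Nat.mem_divisors] at ha hb
      have ha0 : a ≠ 0 := ha.2.ne_zero
      have hb0 : b ≠ 0 := hb.2.ne_zero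
      have hgcd : Nat.gcd a b = 1 ↔ Disjoint a.primeFactors b.primeFactors := by
        rw [← Nat.coprime_iff_gcd_eq_one, ← Nat.disjoint_primeFactors ha0 hb0]
      simp only [hF]
      rw [aux_term k a ha.2, aux_term k b hb.2]
      by_cases hd : Disjoint a.primeFactors b.primeFactors
      · rw [if_pos (hgcd.mpr hd), if_pos hd]
      · rw [if_neg (fun h => hd (hgcd.mp h)), if_neg hd]
theorem stmt_5 (m k : ℕ) (hm : 0 < m) (hk : 0 < k) (hkm : k ∣ m) :
    ∑ d ∈ m.divisors, ∑ e ∈ m.divisors,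
        (if Nat.gcd d e = k then ((ArithmeticFunction.moebius d : ℚ) / d) *
          ((ArithmeticFunction.moebius e : ℚ) / e) else 0) =
      (|(ArithmeticFunction.moebius k : ℚ)| / (k : ℚ) ^ 2) *
        ∏ p ∈ m.primeFactors.filter (fun p => ¬ p ∣ k), (1 - 2 / (p : ℚ)) := by
  classical
  obtain ⟨n, rfl⟩ := hkm
  have hk0 : k ≠ 0 := hk.ne'
  have hn : 0 < n := Nat.pos_of_ne_zero fun h => by simp [h] at hm
  by_cases hsq : Squarefree k
  swap
  · -- k not squarefree : both sides vanish
    rw [moebius_eq_zero_of_not_squarefree hsq]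
    simp only [Int.cast_zero, abs_zero, zero_div, zero_mul]
    refine Finset.sum_eq_zero fun d _ => Finset.sum_eq_zero fun e _ => ?_
    split_ifs with h
    · have hkd : k ∣ d := h ▸ Nat.gcd_dvd_left d e
      have hd : ¬ Squarefree d := fun hd' => hsq (hd'.squarefree_of_dvd hkd)
      rw [moebius_eq_zero_of_not_squarefree hd]
      simp
    · rfl
  · set F : ℕ × ℕ → ℚ := fun x =>
      if Nat.gcd x.1 x.2 = k then ((moebius x.1 : ℚ)/x.1) * ((moebius x.2 : ℚ)/x.2) else 0
      with hF
    rw [← Finset.sum_product' (f := fun d e =>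
      if Nat.gcd d e = k then ((moebius d : ℚ)/d) * ((moebius e : ℚ)/e) else 0)]
    have hmn0 : k * n ≠ 0 := by positivity
    have hsubim : ((n.divisors ×ˢ n.divisors).image (fun x : ℕ × ℕ => (k*x.1, k*x.2)))
        ⊆ (k*n).divisors ×ˢ (k*n).divisors := by
      intro x hx
      obtain ⟨⟨a, b⟩, hab, rfl⟩ := Finset.mem_image.mp hx
      simp only [Finset.mem_product, Nat.mem_divisors] at hab ⊢
      exact ⟨⟨mul_dvd_mul_left k hab.1.1, hmn0⟩, mul_dvd_mul_left k hab.2.1, hmn0⟩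
    have hzero : ∀ x ∈ (k*n).divisors ×ˢ (k*n).divisors,
        x ∉ ((n.divisors ×ˢ n.divisors).image (fun x : ℕ × ℕ => (k*x.1, k*x.2))) → F x = 0 := by
      rintro ⟨d, e⟩ hx hnx
      rw [Finset.mem_product, Nat.mem_divisors, Nat.mem_divisors] at hx
      simp only [hF]
      split_ifs with h
      · exfalso
        apply hnx
        have hkd : k ∣ d := h ▸ Nat.gcd_dvd_left d e
        have hke : k ∣ e := h ▸ Nat.gcd_dvd_right d e
        obtain ⟨a, rfl⟩ := hkd
        obtain ⟨b, rfl⟩ := hke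
        refine Finset.mem_image.mpr ⟨(a, b), Finset.mem_product.mpr ⟨?_, ?_⟩, rfl⟩
        · exact Nat.mem_divisors.mpr ⟨(mul_dvd_mul_iff_left hk0).mp hx.1.1, hn.ne'⟩
        · exact Nat.mem_divisors.mpr ⟨(mul_dvd_mul_iff_left hk0).mp hx.2.1, hn.ne'⟩
      · rfl
    have hinj : ∀ x ∈ n.divisors ×ˢ n.divisors, ∀ y ∈ n.divisors ×ˢ n.divisors,
        (fun x : ℕ × ℕ => (k*x.1, k*x.2)) x = (fun x : ℕ × ℕ => (k*x.1, k*x.2)) y → x = y := by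
      rintro ⟨a, b⟩ _ ⟨c, d⟩ _ h
      simp only [Prod.mk.injEq] at h ⊢
      exact ⟨Nat.eq_of_mul_eq_mul_left hk h.1, Nat.eq_of_mul_eq_mul_left hk h.2⟩
    rw [← Finset.sum_subset hsubim hzero, Finset.sum_image hinj]
    have hpoint : ∀ x ∈ n.divisors ×ˢ n.divisors, F (k*x.1, k*x.2)
        = (((moebius k : ℚ)/k) * ((moebius k : ℚ)/k)) *
          (if Nat.gcd x.1 x.2 = 1 then
            (if Nat.Coprime x.1 k then (moebius x.1 : ℚ)/x.1 else 0) *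
            (if Nat.Coprime x.2 k then (moebius x.2 : ℚ)/x.2 else 0) else 0) := by
      rintro ⟨a, b⟩ _
      have hmul : ∀ c : ℕ, (moebius (k*c) : ℚ)
          = (if Nat.Coprime c k then (moebius k : ℚ) * (moebius c : ℚ) else 0) := by
        intro c
        by_cases hc : Nat.Coprime c k
        · rw [if_pos hc, ← Int.cast_mul, ← isMultiplicative_moebius.map_mul_of_coprime hc.symm]
        · rw [if_neg hc]
          obtain ⟨p, hp, hpc, hpk⟩ := Nat.Prime.not_coprime_iff_dvd.mp hc
          have : ¬ Squarefree (k * c) := by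
            intro hs
            exact hp.prime.not_unit (hs p (mul_dvd_mul hpk hpc))
          rw [moebius_eq_zero_of_not_squarefree this, Int.cast_zero]
      simp only [hF]
      have hcond : Nat.gcd (k*a) (k*b) = k ↔ Nat.gcd a b = 1 := by
        rw [Nat.gcd_mul_left]
        constructor
        · intro h
          exact Nat.eq_of_mul_eq_mul_left hk (by rw [h, mul_one])
        · intro h
          rw [h, mul_one]
      by_cases hab : Nat.gcd a b = 1
      · rw [if_pos (hcond.mpr hab), if_pos hab, hmul a, hmul b]
        by_cases hak : Nat.Coprime a k
        · by_cases hbk : Nat.Coprime b k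
          · rw [if_pos hak, if_pos hbk, if_pos hak, if_pos hbk]
            push_cast
            ring
          · rw [if_neg hbk, if_neg hbk]
            simp
        · rw [if_neg hak, if_neg hak]
          simp
      · rw [if_neg (fun h => hab (hcond.mp h)), if_neg hab, mul_zero]
    rw [Finset.sum_congr rfl hpoint, ← Finset.mul_sum]
    rw [Finset.sum_product (f := fun x : ℕ × ℕ =>
      if Nat.gcd x.1 x.2 = 1 then
        (if Nat.Coprime x.1 k then (moebius x.1 : ℚ)/x.1 else 0) *
        (if Nat.Coprime x.2 k then (moebius x.2 : ℚ)/x.2 else 0) else 0)]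
    rw [aux_W n k hn]
    have hsets : ((k*n).primeFactors.filter (fun p => ¬ p ∣ k))
        = n.primeFactors.filter (fun p => ¬ p ∣ k) := by
      ext p
      simp only [Finset.mem_filter, Nat.primeFactors_mul hk0 hn.ne', Finset.mem_union,
        Nat.mem_primeFactors]
      constructor
      · rintro ⟨h1 | h1, h2⟩
        · exact absurd h1.2.1 h2
        · exact ⟨h1, h2⟩
      · rintro ⟨h1, h2⟩
        exact ⟨Or.inr h1, h2⟩
    rw [hsets]
    have hone : ((moebius k : ℤ) : ℚ) * ((moebius k : ℤ) : ℚ) = 1 := by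
      rw [moebius_apply_of_squarefree hsq]
      push_cast
      rw [← pow_add]
      exact Even.neg_one_pow ⟨cardFactors k, rfl⟩
    have habs : |((moebius k : ℤ) : ℚ)| = 1 := by
      rw [moebius_apply_of_squarefree hsq]
      push_cast
      rw [abs_pow, abs_neg, abs_one, one_pow]
    rw [div_mul_div_comm, hone, habs, pow_two]
end

section
/- Let n be a positive integer with divisors a and b, g = gcd(a,b), and c ∈ ℤ/nℤ with g ∣ c. Set n' = n/g, a' = a/g, b' = b/g, c' = c/g. Then the map (ax, by) ↦ (a'x, b'y) is a bijection from S_{n;a,b}(c) onto S_{n';a',b'}(c'), and in particular N_{n;a,b}(c) = N_{n';a',b'}(c'). -/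
/-- `S n a b c` is the set of representation pairs `(x, y)` with
`u = a*x ∈ atom(a)`, `v = b*y ∈ atom(b)` and `u + v ≡ c (mod n)`;
each element of `S_{n;a,b}(c) = {(ax, by) : ...}` corresponds uniquely to such a pair. -/
theorem stmt_9 (n a b c : ℕ) (hn : 0 < n) (ha : a ∣ n) (hb : b ∣ n)
    (g : ℕ) (hg : g = Nat.gcd a b) (hc : g ∣ c) (hcn : c < n)
    (S : ℕ → ℕ → ℕ → ℕ → Finset (ℕ × ℕ))
    (hS : ∀ N A B C, S N A B C =
      (Finset.Icc 1 (N / A) ×ˢ Finset.Icc 1 (N / B)).filter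
        (fun p => Nat.Coprime p.1 (N / A) ∧ Nat.Coprime p.2 (N / B) ∧
          (A * p.1 + B * p.2) % N = C % N)) :
    -- the map (a*x, b*y) ↦ (a'*x, b'*y), i.e. (x,y) ↦ (x,y) on representation
    -- pairs, is a bijection from S_{n;a,b}(c) onto S_{n';a',b'}(c'):
    S n a b c = S (n / g) (a / g) (b / g) (c / g) ∧
      (S n a b c).card = (S (n / g) (a / g) (b / g) (c / g)).card := by
  have hga : g ∣ a := hg ▸ Nat.gcd_dvd_left a b
  have hgb : g ∣ b := hg ▸ Nat.gcd_dvd_right a b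
  have hgn : g ∣ n := hga.trans ha
  have ha0 : 0 < a := Nat.pos_of_dvd_of_pos ha hn
  have hg0 : 0 < g := Nat.pos_of_dvd_of_pos hga ha0
  have han : n / g / (a / g) = n / a := by
    rw [Nat.div_div_eq_div_mul, Nat.mul_div_cancel' hga]
  have hbn : n / g / (b / g) = n / b := by
    rw [Nat.div_div_eq_div_mul, Nat.mul_div_cancel' hgb]
  have key : S n a b c = S (n / g) (a / g) (b / g) (c / g) := by
    rw [hS, hS, han, hbn]
    apply Finset.filter_congr
    intro p _
    have hmod : (a * p.1 + b * p.2) % n = c % n ↔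
        ((a / g) * p.1 + (b / g) * p.2) % (n / g) = (c / g) % (n / g) := by
      have e1 : a * p.1 + b * p.2 = g * ((a / g) * p.1 + (b / g) * p.2) := by
        rw [Nat.mul_add, ← Nat.mul_assoc, ← Nat.mul_assoc,
          Nat.mul_div_cancel' hga, Nat.mul_div_cancel' hgb]
      have e2 : n = g * (n / g) := (Nat.mul_div_cancel' hgn).symm
      have e3 : c = g * (c / g) := (Nat.mul_div_cancel' hc).symm
      constructor
      · intro h
        have := h
        rw [e1, e3] at this
        conv_lhs at this => rw [e2]
        conv_rhs at this => rw [e2]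
        rw [Nat.mul_mod_mul_left, Nat.mul_mod_mul_left] at this
        exact Nat.eq_of_mul_eq_mul_left hg0 this
      · intro h
        have := congrArg (g * ·) h
        rw [← Nat.mul_mod_mul_left, ← Nat.mul_mod_mul_left, ← e1, ← e2, ← e3] at this
        exact this
    simp only [hmod]
  exact ⟨key, by rw [key]⟩
end

section
/- For a positive integer n and c ∈ ℤ/nℤ, the number of pairs (x,y) of units of ℤ/nℤ with x + y = c equals n · ∏_{p prime, p ∣ n, p ∣ c} (1 − 1/p) · ∏_{p prime, p ∣ n, p ∤ c} (1 − 2/p). -/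
open Finset

lemma isUnit_pair {A B : Type*} [Monoid A] [Monoid B] (u : A) (v : B) :
    IsUnit ((u, v) : A × B) ↔ IsUnit u ∧ IsUnit v := by
  constructor
  · intro h
    exact ⟨h.map (MonoidHom.fst A B), h.map (MonoidHom.snd A B)⟩
  · rintro ⟨⟨u', hu⟩, ⟨v', hv⟩⟩
    exact ⟨MulEquiv.prodUnits.symm (u', v'), by rw [← hu, ← hv]; rfl⟩

lemma card_mul_eq (a b : ℕ) (ha : a ≠ 0) (hb : b ≠ 0) (hab : Nat.Coprime a b) (c : ZMod (a*b)) :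
    Nat.card {x : ZMod (a*b) // IsUnit x ∧ IsUnit (c - x)} =
    Nat.card {u : ZMod a // IsUnit u ∧ IsUnit ((ZMod.chineseRemainder hab c).1 - u)} *
    Nat.card {v : ZMod b // IsUnit v ∧ IsUnit ((ZMod.chineseRemainder hab c).2 - v)} := by
  rw [← Nat.card_prod]
  apply Nat.card_congr
  set e := ZMod.chineseRemainder hab with he
  have h1 : ∀ y : ZMod (a*b), IsUnit y ↔ IsUnit (e y).1 ∧ IsUnit (e y).2 := fun y => by
    constructor
    · intro h
      exact ⟨(h.map e.toRingHom).map (RingHom.fst _ _), (h.map e.toRingHom).map (RingHom.snd _ _)⟩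
    · rintro ⟨hu, hv⟩
      have h2 : IsUnit (e y) := by
        have := (isUnit_pair (e y).1 (e y).2).mpr ⟨hu, hv⟩
        simpa using this
      simpa using h2.map e.symm.toRingHom
  refine Equiv.trans (Equiv.subtypeEquiv e.toEquiv ?_) (Equiv.subtypeProdEquivProd)
  intro x
  show _ ↔ (IsUnit (e x).1 ∧ IsUnit ((e c).1 - (e x).1)) ∧ (IsUnit (e x).2 ∧ IsUnit ((e c).2 - (e x).2))
  have h2 : (e (c - x)).1 = (e c).1 - (e x).1 := by rw [map_sub]; rfl
  have h3 : (e (c - x)).2 = (e c).2 - (e x).2 := by rw [map_sub]; rfl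
  rw [h1 x, h1 (c - x), h2, h3]
  tauto

lemma crt_fst (a b : ℕ) [NeZero a] [NeZero b] (hab : Nat.Coprime a b) (c : ZMod (a*b)) :
    ((ZMod.chineseRemainder hab c).1).val = c.val % a := by
  have : NeZero (a * b) := ⟨mul_ne_zero (NeZero.ne a) (NeZero.ne b)⟩
  have h : (RingHom.fst (ZMod a) (ZMod b)).comp (ZMod.chineseRemainder hab).toRingHom
      = ZMod.castHom (dvd_mul_right a b) (ZMod a) := RingHom.ext_zmod _ _
  have h2 : (ZMod.chineseRemainder hab c).1 = ZMod.castHom (dvd_mul_right a b) (ZMod a) c :=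
    RingHom.congr_fun h c
  rw [h2]
  conv_lhs => rw [← ZMod.natCast_zmod_val c]
  rw [map_natCast, ZMod.val_natCast]

lemma crt_snd (a b : ℕ) [NeZero a] [NeZero b] (hab : Nat.Coprime a b) (c : ZMod (a*b)) :
    ((ZMod.chineseRemainder hab c).2).val = c.val % b := by
  have : NeZero (a * b) := ⟨mul_ne_zero (NeZero.ne a) (NeZero.ne b)⟩
  have h : (RingHom.snd (ZMod a) (ZMod b)).comp (ZMod.chineseRemainder hab).toRingHom
      = ZMod.castHom (dvd_mul_left b a) (ZMod b) := RingHom.ext_zmod _ _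
  have h2 : (ZMod.chineseRemainder hab c).2 = ZMod.castHom (dvd_mul_left b a) (ZMod b) c :=
    RingHom.congr_fun h c
  rw [h2]
  conv_lhs => rw [← ZMod.natCast_zmod_val c]
  rw [map_natCast, ZMod.val_natCast]

lemma isUnit_zmod_iff (n : ℕ) [NeZero n] (x : ZMod n) : IsUnit x ↔ x.val.Coprime n := by
  conv_lhs => rw [← ZMod.natCast_zmod_val x]
  exact ZMod.isUnit_iff_coprime _ _

lemma fiber_card (p n : ℕ) [NeZero n] [NeZero p] (hpn : p ∣ n) (b : ZMod p) :
    p * (univ.filter (fun x : ZMod n =>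
      ZMod.castHom hpn (ZMod p) x = b)).card = n := by
  set π := ZMod.castHom hpn (ZMod p) with hπ
  -- all fibers have the same cardinality
  have hconst : ∀ b : ZMod p, (univ.filter (fun x : ZMod n => π x = b)).card
      = (univ.filter (fun x : ZMod n => π x = 0)).card := by
    intro b
    have hx0 : π ((b.val : ZMod n)) = b := by rw [map_natCast, ZMod.natCast_zmod_val]
    apply Finset.card_bij' (fun x _ => x - (b.val : ZMod n))
      (fun x _ => x + (b.val : ZMod n))
    · intro x hx; simp only [mem_filter, mem_univ, true_and] at hx ⊢
      rw [map_sub, hx, hx0, sub_self]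
    · intro x hx; simp only [mem_filter, mem_univ, true_and] at hx ⊢
      rw [map_add, hx, hx0, zero_add]
    · intro x _; ring
    · intro x _; ring
  have hsum : ∑ b : ZMod p, (univ.filter (fun x : ZMod n => π x = b)).card
      = Fintype.card (ZMod n) := by
    rw [Fintype.card, Finset.card_eq_sum_card_fiberwise (fun x _ => mem_univ (π x))]
  rw [Finset.sum_congr rfl (fun b _ => hconst b), Finset.sum_const, Finset.card_univ,
    ZMod.card, ZMod.card, smul_eq_mul] at hsum
  rw [hconst b, hsum]

lemma count_eq_filter_card (n : ℕ) [NeZero n] (P : ZMod n → Prop) [DecidablePred P] :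
    Nat.card {x : ZMod n // P x} = (univ.filter P).card := by
  rw [Nat.card_eq_fintype_card, Fintype.card_subtype]

lemma key_pp (p k : ℕ) (pp : Nat.Prime p) (hk : 0 < k) (c : ZMod (p^k)) :
    Nat.card {x : ZMod (p^k) // IsUnit x ∧ IsUnit (c - x)} =
      (if p ∣ c.val then p - 1 else p - 2) * p^(k-1) := by
  classical
  have hpk : NeZero (p^k) := ⟨pow_ne_zero _ pp.pos.ne'⟩
  have hp0 : NeZero p := ⟨pp.pos.ne'⟩
  set π := ZMod.castHom (dvd_pow_self p hk.ne') (ZMod p) with hπ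
  have hval : ∀ x : ZMod (p^k), π x = (x.val : ZMod p) := by
    intro x
    conv_lhs => rw [← ZMod.natCast_zmod_val x]
    rw [map_natCast]
  have unit_iff : ∀ x : ZMod (p^k), IsUnit x ↔ π x ≠ 0 := by
    intro x
    rw [isUnit_zmod_iff, Nat.coprime_pow_right_iff hk, Nat.coprime_comm,
      pp.coprime_iff_not_dvd, hval, Ne, ZMod.natCast_eq_zero_iff]
  have hcond : ∀ x : ZMod (p^k), (IsUnit x ∧ IsUnit (c - x)) ↔
      π x ∈ (univ \ {0, π c} : Finset (ZMod p)) := by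
    intro x
    rw [unit_iff, unit_iff, map_sub, sub_ne_zero]
    simp only [mem_sdiff, mem_univ, true_and, mem_insert, mem_singleton, not_or]
    tauto
  rw [count_eq_filter_card]
  have hfilter : (univ.filter (fun x : ZMod (p^k) => IsUnit x ∧ IsUnit (c - x)))
      = univ.filter (fun x => π x ∈ (univ \ {0, π c} : Finset (ZMod p))) := by
    apply Finset.filter_congr; intro x _; simp [hcond x]
  rw [hfilter]
  -- fiberwise count
  have hcount : (univ.filter (fun x : ZMod (p^k) =>
      π x ∈ (univ \ {0, π c} : Finset (ZMod p)))).card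
      = (univ \ {0, π c} : Finset (ZMod p)).card * p^(k-1) := by
    rw [Finset.card_eq_sum_card_fiberwise
      (f := π) (s := univ.filter (fun x : ZMod (p^k) => π x ∈ (univ \ {0, π c} : Finset (ZMod p))))
      (t := (univ \ {0, π c} : Finset (ZMod p)))
      (fun x hx => (mem_filter.mp hx).2)]
    have : ∀ b ∈ (univ \ {0, π c} : Finset (ZMod p)),
        ((univ.filter (fun x : ZMod (p^k) =>
          π x ∈ (univ \ {0, π c} : Finset (ZMod p)))).filter (fun x => π x = b)).card
        = p^(k-1) := by
      intro b hb
      have h1 : ((univ.filter (fun x : ZMod (p^k) =>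
          π x ∈ (univ \ {0, π c} : Finset (ZMod p)))).filter (fun x => π x = b))
          = univ.filter (fun x => π x = b) := by
        rw [Finset.filter_filter]
        apply Finset.filter_congr
        intro x _
        constructor
        · exact fun h => h.2
        · intro h; exact ⟨h ▸ hb, h⟩
      rw [h1]
      have h2 := fiber_card p (p^k) (dvd_pow_self p hk.ne') b
      have h3 : p * p^(k-1) = p^k := by
        rw [← pow_succ', Nat.sub_add_cancel (Nat.one_le_iff_ne_zero.mpr hk.ne')]
      exact Nat.eq_of_mul_eq_mul_left pp.pos (h2.trans h3.symm)
    rw [Finset.sum_congr rfl this, Finset.sum_const, smul_eq_mul]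
  rw [hcount]
  congr 1
  -- card of the complement set
  have hc0 : π c = 0 ↔ p ∣ c.val := by rw [hval, ZMod.natCast_eq_zero_iff]
  by_cases hdvd : p ∣ c.val
  · have : π c = 0 := hc0.mpr hdvd
    rw [if_pos hdvd, this]
    rw [Finset.card_sdiff_of_subset (by simp)]
    simp [ZMod.card]
  · have hne : π c ≠ 0 := fun h => hdvd (hc0.mp h)
    rw [if_neg hdvd]
    rw [Finset.card_sdiff_of_subset (by simp)]
    rw [Finset.card_univ, ZMod.card, Finset.card_insert_of_notMem (by simpa using (Ne.symm hne)),
      Finset.card_singleton]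

lemma key : ∀ n : ℕ, 0 < n → ∀ c : ZMod n,
    (Nat.card {x : ZMod n // IsUnit x ∧ IsUnit (c - x)} : ℚ) =
      (n : ℚ) * (∏ p ∈ n.primeFactors.filter (fun p => p ∣ c.val), (1 - 1 / (p : ℚ)))
        * (∏ p ∈ n.primeFactors.filter (fun p => ¬ p ∣ c.val), (1 - 2 / (p : ℚ))) := by
  intro n
  induction n using Nat.recOnPosPrimePosCoprime with
  | zero => exact fun h => absurd h (by simp)
  | one =>
    intro _ c
    have h1 : Nat.card {x : ZMod 1 // IsUnit x ∧ IsUnit (c - x)} = 1 := by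
      rw [Nat.card_eq_one_iff_unique]
      exact ⟨⟨fun a b => Subtype.ext (Subsingleton.elim _ _)⟩,
        ⟨⟨0, isUnit_of_subsingleton _, isUnit_of_subsingleton _⟩⟩⟩
    rw [h1]
    simp
  | prime_pow p k hp hk =>
    intro _ c
    have pp : p.Prime := hp
    have hp0 : (p : ℚ) ≠ 0 := Nat.cast_ne_zero.mpr pp.pos.ne'
    rw [key_pp p k pp hk c, Nat.primeFactors_prime_pow hk.ne' hp,
      Finset.filter_singleton, Finset.filter_singleton]
    have hpow : (p:ℚ)^k = (p:ℚ)^(k-1) * p := by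
      rw [← pow_succ, Nat.sub_add_cancel (Nat.one_le_iff_ne_zero.mpr hk.ne')]
    by_cases hdvd : p ∣ c.val
    · simp only [hdvd, not_true, if_true, if_false, Finset.prod_singleton, Finset.prod_empty]
      push_cast [Nat.cast_sub pp.one_lt.le, hpow]
      field_simp
    · simp only [hdvd, not_false_iff, if_true, if_false, Finset.prod_singleton,
        Finset.prod_empty]
      push_cast [Nat.cast_sub pp.two_le, hpow]
      field_simp
  | coprime a b ha hb hab iha ihb =>
    intro _ c
    have ha0 : a ≠ 0 := by omega
    have hb0 : b ≠ 0 := by omega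
    have : NeZero a := ⟨ha0⟩
    have : NeZero b := ⟨hb0⟩
    set c1 := (ZMod.chineseRemainder hab c).1 with hc1
    set c2 := (ZMod.chineseRemainder hab c).2 with hc2
    rw [card_mul_eq a b ha0 hb0 hab c, Nat.cast_mul,
      iha (by omega) c1, ihb (by omega) c2,
      Nat.Coprime.primeFactors_mul hab, Finset.filter_union, Finset.filter_union,
      Finset.prod_union (Finset.disjoint_filter_filter hab.disjoint_primeFactors),
      Finset.prod_union (Finset.disjoint_filter_filter hab.disjoint_primeFactors)]
    have e1 : a.primeFactors.filter (fun q => q ∣ c.val)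
        = a.primeFactors.filter (fun q => q ∣ c1.val) := by
      apply Finset.filter_congr
      intro q hq
      rw [hc1, crt_fst a b hab c, Nat.dvd_mod_iff (Nat.dvd_of_mem_primeFactors hq)]
    have e2 : b.primeFactors.filter (fun q => q ∣ c.val)
        = b.primeFactors.filter (fun q => q ∣ c2.val) := by
      apply Finset.filter_congr
      intro q hq
      rw [hc2, crt_snd a b hab c, Nat.dvd_mod_iff (Nat.dvd_of_mem_primeFactors hq)]
    have e3 : a.primeFactors.filter (fun q => ¬ q ∣ c.val)
        = a.primeFactors.filter (fun q => ¬ q ∣ c1.val) := by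
      apply Finset.filter_congr
      intro q hq
      rw [hc1, crt_fst a b hab c, Nat.dvd_mod_iff (Nat.dvd_of_mem_primeFactors hq)]
    have e4 : b.primeFactors.filter (fun q => ¬ q ∣ c.val)
        = b.primeFactors.filter (fun q => ¬ q ∣ c2.val) := by
      apply Finset.filter_congr
      intro q hq
      rw [hc2, crt_snd a b hab c, Nat.dvd_mod_iff (Nat.dvd_of_mem_primeFactors hq)]
    rw [e1, e2, e3, e4]
    push_cast
    ring

lemma card_pairs (n : ℕ) (c : ZMod n) :
    Nat.card {p : (ZMod n)ˣ × (ZMod n)ˣ // (p.1 : ZMod n) + (p.2 : ZMod n) = c} =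
    Nat.card {x : ZMod n // IsUnit x ∧ IsUnit (c - x)} := by
  apply Nat.card_congr
  refine ⟨fun p => ⟨p.1.1, p.1.1.isUnit, ?_⟩, fun x => ⟨(x.2.1.unit, x.2.2.unit), ?_⟩, ?_, ?_⟩
  · have h := p.2
    rw [(eq_sub_of_add_eq' h).symm]; exact p.1.2.isUnit
  · simp
  · rintro ⟨⟨x, y⟩, h⟩
    ext
    · simp
    · simp only []; exact (eq_sub_of_add_eq' h).symm
  · rintro ⟨x, h⟩; simp


theorem stmt_13 (n : ℕ) (hn : 0 < n) (c : ZMod n) :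
    (Nat.card {p : (ZMod n)ˣ × (ZMod n)ˣ // (p.1 : ZMod n) + (p.2 : ZMod n) = c} : ℚ) =
      (n : ℚ) * (∏ p ∈ n.primeFactors.filter (fun p => p ∣ c.val), (1 - 1 / (p : ℚ)))
        * (∏ p ∈ n.primeFactors.filter (fun p => ¬ p ∣ c.val), (1 - 2 / (p : ℚ))) := by
  rw [card_pairs]
  exact key n hn c
end

section
/- Let n be a positive integer with divisors a and b, g = gcd(a,b), n' = n/g, a' = a/g, b' = b/g. For c ∈ ℤ/nℤ, c lies in atom(a) + atom(b) if and only if: (i) g ∣ c; (ii) gcd(c', a'b') = 1 where c' = c/g; and (iii) n' is odd or a'b'c' is even. -/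
private lemma copr_trans {x x' d : ℤ} (h : d ∣ x - x') (h' : IsCoprime x' d) : IsCoprime x d := by
  obtain ⟨k, hk⟩ := h
  have : x = x' + d * k := by linarith
  rw [this]; exact h'.add_mul_left_left k

private lemma copr_prime {p : ℕ} (hp : p.Prime) {Y : ℤ} (h : ¬ (p:ℤ) ∣ Y) : IsCoprime Y (p:ℤ) := by
  rw [Int.isCoprime_iff_gcd_eq_one]
  have h2 : ¬ p ∣ Y.natAbs := fun hd => h (Int.natCast_dvd.mpr hd)
  have := (Nat.Prime.coprime_iff_not_dvd hp).mpr h2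
  simpa [Int.gcd, Nat.coprime_comm] using this

private lemma not_dvd_of_copr {p : ℕ} (hp : p.Prime) {C : ℤ} (h : IsCoprime C (p:ℤ)) : ¬ (p:ℤ) ∣ C := by
  intro hd
  have : IsUnit ((p:ℤ)) := h.isUnit_of_dvd' hd dvd_rfl
  rw [Int.isUnit_iff] at this
  have := hp.two_le
  omega

/-- base case: B = 1, prime power modulus -/
private lemma keyB1 (p i l : ℕ) (hp : p.Prime) (C : ℤ)
    (hC : IsCoprime C (((p:ℤ))^i)) (hpar : Odd (p^(i+l)) ∨ (2:ℤ) ∣ ((p:ℤ))^i * C) :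
    ∃ X Y : ℤ, IsCoprime X ((p:ℤ)^l) ∧ IsCoprime Y ((p:ℤ)^(i+l)) ∧
      (p:ℤ)^i * X + Y - C = 0 := by
  by_cases hi : i = 0
  · subst hi
    simp only [pow_zero, one_mul] at *
    by_cases hl : l = 0
    · subst hl; exact ⟨1, C - 1, by simpa using isCoprime_one_right, by simpa using (isCoprime_one_right : IsCoprime (C-1) 1), by ring⟩
    by_cases hp2 : p = 2
    · -- p = 2 : C must be even
      have hC2 : (2:ℤ) ∣ C := by
        rcases hpar with h | h
        · exfalso; subst hp2
          rw [Nat.odd_iff] at h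
          have : (2:ℕ) ∣ 2^(0+l) := dvd_pow_self 2 (by omega)
          omega
        · simpa using h
      refine ⟨1, C - 1, isCoprime_one_left, ?_, by ring⟩
      have : ¬ (p:ℤ) ∣ (C - 1) := by
        subst hp2; push_cast; omega
      exact (copr_prime hp this).pow_right
    · -- p odd
      have hodd : ¬ (p:ℤ) ∣ 2 := by
        intro hd
        have h2 := Int.le_of_dvd (by norm_num) hd
        have h3 := hp.two_le
        have : p = 2 := by omega
        exact hp2 this
      by_cases hd : (p:ℤ) ∣ C - 1
      · refine ⟨2, C - 2, (copr_prime hp hodd).pow_right, ?_, by ring⟩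
        have : ¬ (p:ℤ) ∣ (C - 2) := by
          intro h2
          have : (p:ℤ) ∣ 1 := by
            have := dvd_sub hd h2; simpa using this
          have := Int.le_of_dvd (by norm_num) this
          have := hp.two_le; omega
        exact (copr_prime hp this).pow_right
      · exact ⟨1, C - 1, isCoprime_one_left.pow_right,
          (copr_prime hp hd).pow_right, by ring⟩
  · -- i ≥ 1
    have hpc : IsCoprime C (p:ℤ) :=
      hC.of_isCoprime_of_dvd_right (dvd_pow_self _ hi)
    have hnd : ¬ (p:ℤ) ∣ C := not_dvd_of_copr hp hpc
    refine ⟨1, C - (p:ℤ)^i, isCoprime_one_left, ?_, by ring⟩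
    have : ¬ (p:ℤ) ∣ (C - (p:ℤ)^i) := by
      intro h
      exact hnd (by have := dvd_add h (dvd_pow_self (p:ℤ) hi); simpa using this)
    exact (copr_prime hp this).pow_right

private lemma crt {m₁ m₂ : ℤ} (h : IsCoprime m₁ m₂) (a₁ a₂ : ℤ) :
    ∃ x : ℤ, m₁ ∣ x - a₁ ∧ m₂ ∣ x - a₂ := by
  obtain ⟨e, f, hef⟩ := h
  refine ⟨a₂*e*m₁ + a₁*f*m₂, ⟨e*(a₂-a₁), by linear_combination a₁ * hef⟩,
    ⟨f*(a₁-a₂), by linear_combination a₂ * hef⟩⟩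

private lemma combine (m₁ m₂ A₁ A₂ B₁ B₂ r₁ r₂ : ℕ) (C X₁ Y₁ X₂ Y₂ : ℤ)
    (hco : Nat.Coprime m₁ m₂) (e₁ : A₁*B₁*r₁ = m₁) (e₂ : A₂*B₂*r₂ = m₂)
    (hX₁ : IsCoprime X₁ ((B₁:ℤ)*(r₁:ℤ))) (hY₁ : IsCoprime Y₁ ((A₁:ℤ)*(r₁:ℤ)))
    (h₁ : (m₁:ℤ) ∣ ((A₁:ℤ)*X₁ + (B₁:ℤ)*Y₁ - C))
    (hX₂ : IsCoprime X₂ ((B₂:ℤ)*(r₂:ℤ))) (hY₂ : IsCoprime Y₂ ((A₂:ℤ)*(r₂:ℤ)))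
    (h₂ : (m₂:ℤ) ∣ ((A₂:ℤ)*X₂ + (B₂:ℤ)*Y₂ - C)) :
    ∃ X Y : ℤ, IsCoprime X (((B₁:ℤ)*(r₁:ℤ))*((B₂:ℤ)*(r₂:ℤ))) ∧
      IsCoprime Y (((A₁:ℤ)*(r₁:ℤ))*((A₂:ℤ)*(r₂:ℤ))) ∧
      ((m₁:ℤ)*(m₂:ℤ)) ∣ ((A₁:ℤ)*(A₂:ℤ)*X + (B₁:ℤ)*(B₂:ℤ)*Y - C) := by
  have hm : IsCoprime (m₁:ℤ) (m₂:ℤ) := Nat.isCoprime_iff_coprime.mpr hco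
  have hB₁r₁ : ((B₁:ℤ)*(r₁:ℤ)) ∣ (m₁:ℤ) := by
    refine ⟨A₁, ?_⟩; push_cast [← e₁]; ring
  have hA₁r₁ : ((A₁:ℤ)*(r₁:ℤ)) ∣ (m₁:ℤ) := by
    refine ⟨B₁, ?_⟩; push_cast [← e₁]; ring
  have hB₂r₂ : ((B₂:ℤ)*(r₂:ℤ)) ∣ (m₂:ℤ) := by
    refine ⟨A₂, ?_⟩; push_cast [← e₂]; ring
  have hA₂r₂ : ((A₂:ℤ)*(r₂:ℤ)) ∣ (m₂:ℤ) := by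
    refine ⟨B₂, ?_⟩; push_cast [← e₂]; ring
  -- coprimality of cross factors with the other modulus
  have hA₂m₁ : IsCoprime ((A₂:ℤ)) (m₁:ℤ) := by
    have : ((A₂:ℤ)) ∣ (m₂:ℤ) := ⟨(B₂:ℤ)*(r₂:ℤ), by push_cast [← e₂]; ring⟩
    exact (hm.symm.of_isCoprime_of_dvd_left this)
  have hB₂m₁ : IsCoprime ((B₂:ℤ)) (m₁:ℤ) := by
    have : ((B₂:ℤ)) ∣ (m₂:ℤ) := ⟨(A₂:ℤ)*(r₂:ℤ), by push_cast [← e₂]; ring⟩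
    exact (hm.symm.of_isCoprime_of_dvd_left this)
  have hA₁m₂ : IsCoprime ((A₁:ℤ)) (m₂:ℤ) := by
    have : ((A₁:ℤ)) ∣ (m₁:ℤ) := ⟨(B₁:ℤ)*(r₁:ℤ), by push_cast [← e₁]; ring⟩
    exact (hm.of_isCoprime_of_dvd_left this)
  have hB₁m₂ : IsCoprime ((B₁:ℤ)) (m₂:ℤ) := by
    have : ((B₁:ℤ)) ∣ (m₁:ℤ) := ⟨(A₁:ℤ)*(r₁:ℤ), by push_cast [← e₁]; ring⟩
    exact (hm.of_isCoprime_of_dvd_left this)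
  obtain ⟨s, s', hs⟩ := hA₂m₁
  obtain ⟨t, t', ht⟩ := hB₂m₁
  obtain ⟨u, u', hu⟩ := hA₁m₂
  obtain ⟨v, v', hv⟩ := hB₁m₂
  obtain ⟨X, hX1, hX2⟩ := crt hm (s*X₁) (u*X₂)
  obtain ⟨Y, hY1, hY2⟩ := crt hm (t*Y₁) (v*Y₂)
  have hsc : IsCoprime s (m₁:ℤ) := ⟨(A₂:ℤ), s', by linarith⟩
  have htc : IsCoprime t (m₁:ℤ) := ⟨(B₂:ℤ), t', by linarith⟩
  have huc : IsCoprime u (m₂:ℤ) := ⟨(A₁:ℤ), u', by linarith⟩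
  have hvc : IsCoprime v (m₂:ℤ) := ⟨(B₁:ℤ), v', by linarith⟩
  refine ⟨X, Y, ?_, ?_, ?_⟩
  · refine IsCoprime.mul_right ?_ ?_
    · exact copr_trans (dvd_trans hB₁r₁ hX1) (((hsc.of_isCoprime_of_dvd_right hB₁r₁)).mul_left hX₁)
    · exact copr_trans (dvd_trans hB₂r₂ hX2) (((huc.of_isCoprime_of_dvd_right hB₂r₂)).mul_left hX₂)
  · refine IsCoprime.mul_right ?_ ?_
    · exact copr_trans (dvd_trans hA₁r₁ hY1) (((htc.of_isCoprime_of_dvd_right hA₁r₁)).mul_left hY₁)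
    · exact copr_trans (dvd_trans hA₂r₂ hY2) (((hvc.of_isCoprime_of_dvd_right hA₂r₂)).mul_left hY₂)
  · refine IsCoprime.mul_dvd hm ?_ ?_
    · have d4 : (m₁:ℤ) ∣ s*(A₂:ℤ) - 1 := ⟨-s', by linarith⟩
      have d5 : (m₁:ℤ) ∣ t*(B₂:ℤ) - 1 := ⟨-t', by linarith⟩
      have big := dvd_add (dvd_add (dvd_add (dvd_add h₁ (hX1.mul_left ((A₁:ℤ)*(A₂:ℤ))))
        (hY1.mul_left ((B₁:ℤ)*(B₂:ℤ)))) (d4.mul_left ((A₁:ℤ)*X₁))) (d5.mul_left ((B₁:ℤ)*Y₁))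
      have eq : (A₁:ℤ)*(A₂:ℤ)*X + (B₁:ℤ)*(B₂:ℤ)*Y - C =
        ((A₁:ℤ)*X₁ + (B₁:ℤ)*Y₁ - C) + (A₁:ℤ)*(A₂:ℤ)*(X - s*X₁) + (B₁:ℤ)*(B₂:ℤ)*(Y - t*Y₁)
          + (A₁:ℤ)*X₁*(s*(A₂:ℤ) - 1) + (B₁:ℤ)*Y₁*(t*(B₂:ℤ) - 1) := by ring
      rw [eq]; exact big
    · have d4 : (m₂:ℤ) ∣ u*(A₁:ℤ) - 1 := ⟨-u', by linarith⟩
      have d5 : (m₂:ℤ) ∣ v*(B₁:ℤ) - 1 := ⟨-v', by linarith⟩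
      have big := dvd_add (dvd_add (dvd_add (dvd_add h₂ (hX2.mul_left ((A₁:ℤ)*(A₂:ℤ))))
        (hY2.mul_left ((B₁:ℤ)*(B₂:ℤ)))) (d4.mul_left ((A₂:ℤ)*X₂))) (d5.mul_left ((B₂:ℤ)*Y₂))
      have eq : (A₁:ℤ)*(A₂:ℤ)*X + (B₁:ℤ)*(B₂:ℤ)*Y - C =
        ((A₂:ℤ)*X₂ + (B₂:ℤ)*Y₂ - C) + (A₁:ℤ)*(A₂:ℤ)*(X - u*X₂) + (B₁:ℤ)*(B₂:ℤ)*(Y - v*Y₂)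
          + (A₂:ℤ)*X₂*(u*(A₁:ℤ) - 1) + (B₂:ℤ)*Y₂*(v*(B₁:ℤ) - 1) := by ring
      rw [eq]; exact big

private lemma keyPP (p i j l : ℕ) (hp : p.Prime) (hij : i = 0 ∨ j = 0) (C : ℤ)
    (hC : IsCoprime C ((p:ℤ)^i * (p:ℤ)^j))
    (hpar : Odd (p^(i+(j+l))) ∨ (2:ℤ) ∣ (p:ℤ)^i * (p:ℤ)^j * C) :
    ∃ X Y : ℤ, IsCoprime X ((p:ℤ)^j * (p:ℤ)^l) ∧ IsCoprime Y ((p:ℤ)^i * (p:ℤ)^l) ∧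
      ((p:ℤ)^(i+(j+l))) ∣ ((p:ℤ)^i * X + (p:ℤ)^j * Y - C) := by
  rcases hij with hi | hj
  · subst hi
    obtain ⟨X, Y, h1, h2, h3⟩ := keyB1 p j l hp C (by simpa using hC)
      (by simpa [Nat.add_comm] using hpar)
    refine ⟨Y, X, ?_, by simpa using h1, ?_⟩
    · simpa [← pow_add] using h2
    · refine ⟨0, ?_⟩
      simp only [pow_zero, one_mul, mul_zero]
      linarith
  · subst hj
    obtain ⟨X, Y, h1, h2, h3⟩ := keyB1 p i l hp C (by simpa using hC)
      (by simpa using hpar)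
    refine ⟨X, Y, by simpa using h1, ?_, ?_⟩
    · simpa [← pow_add] using h2
    · refine ⟨0, ?_⟩
      simp only [pow_zero, one_mul, mul_zero]
      linarith

private lemma oddd {d m : ℕ} (h : d ∣ m) (hm : Odd m) : Odd d := by
  rcases Nat.even_or_odd d with he | ho
  · obtain ⟨c, rfl⟩ := h
    exact absurd hm (Nat.not_odd_iff_even.mpr (he.mul_right c))
  · exact ho

private lemma key_s16 (m : ℕ) : ∀ A B r : ℕ, 0 < m → A * B * r = m → Nat.Coprime A B →
    ∀ C : ℤ, IsCoprime C ((A:ℤ) * (B:ℤ)) → (Odd m ∨ (2:ℤ) ∣ (A:ℤ) * (B:ℤ) * C) →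
    ∃ X Y : ℤ, IsCoprime X ((B:ℤ) * (r:ℤ)) ∧ IsCoprime Y ((A:ℤ) * (r:ℤ)) ∧
      (m:ℤ) ∣ ((A:ℤ) * X + (B:ℤ) * Y - C) := by
  induction m using Nat.strong_induction_on with
  | _ m IH =>
  intro A B r hm e hAB C hC hpar
  rcases eq_or_lt_of_le (show 1 ≤ m from hm) with h1 | h1
  · -- m = 1
    subst h1
    have e' : A * (B * r) = 1 := by rw [← mul_assoc]; exact e
    have hA : A = 1 := Nat.dvd_one.mp ⟨B * r, e'.symm⟩
    have hB : B = 1 := Nat.dvd_one.mp ⟨A * r, by rw [← e']; ring⟩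
    have hr : r = 1 := Nat.dvd_one.mp ⟨A * B, by rw [← e']; ring⟩
    subst hA; subst hB; subst hr
    exact ⟨0, 0, by simpa using (isCoprime_one_right : IsCoprime (0:ℤ) 1),
      by simpa using (isCoprime_one_right : IsCoprime (0:ℤ) 1), by simp⟩
  · -- m > 1
    have hm0 : m ≠ 0 := by omega
    set p := m.minFac with hpdef
    have hp : p.Prime := Nat.minFac_prime (by omega)
    have hpm : p ∣ m := Nat.minFac_dvd m
    have hA0 : A ≠ 0 := by rintro rfl; simp at e; omega
    have hB0 : B ≠ 0 := by rintro rfl; simp at e; omega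
    have hr0 : r ≠ 0 := by rintro rfl; simp at e; omega
    set i := A.factorization p with hidef
    set j := B.factorization p with hjdef
    set l := r.factorization p with hldef
    set A₂ := ordCompl[p] A with hA2def
    set B₂ := ordCompl[p] B with hB2def
    set r₂ := ordCompl[p] r with hr2def
    have eA : p ^ i * A₂ = A := Nat.ordProj_mul_ordCompl_eq_self A p
    have eB : p ^ j * B₂ = B := Nat.ordProj_mul_ordCompl_eq_self B p
    have er : p ^ l * r₂ = r := Nat.ordProj_mul_ordCompl_eq_self r p
    have hk : m.factorization p = i + (j + l) := by
      rw [← e, Nat.factorization_mul (by positivity) hr0,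
        Nat.factorization_mul hA0 hB0]
      simp [add_assoc]; rfl
    set m₂ := ordCompl[p] m with hm2def
    have em2 : A₂ * B₂ * r₂ = m₂ := by
      rw [hm2def, ← e, Nat.ordCompl_mul, Nat.ordCompl_mul]
    have em : p ^ (i + (j + l)) * m₂ = m := by
      rw [← hk]; exact Nat.ordProj_mul_ordCompl_eq_self m p
    have hm2pos : 0 < m₂ := Nat.ordCompl_pos p hm0
    have hndvd : ¬ p ∣ m₂ := Nat.not_dvd_ordCompl hp hm0
    have hcopm : Nat.Coprime (p ^ (i + (j + l))) m₂ :=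
      Nat.Coprime.pow_left _ ((Nat.Prime.coprime_iff_not_dvd hp).mpr hndvd)
    have hk1 : 1 ≤ i + (j + l) := by
      have := (Nat.Prime.dvd_iff_one_le_factorization hp hm0).mp hpm
      omega
    have hm2lt : m₂ < m := by
      have h2 : 2 ≤ p ^ (i + (j + l)) := by
        calc 2 ≤ p := hp.two_le
        _ ≤ p ^ (i + (j + l)) := Nat.le_self_pow (by omega) p
      nlinarith
    -- i = 0 or j = 0
    have hij : i = 0 ∨ j = 0 := by
      by_contra hcon
      push_neg at hcon
      have hpa : p ∣ A := dvd_trans (dvd_pow_self p (by omega)) ⟨A₂, eA.symm⟩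
      have hpb : p ∣ B := dvd_trans (dvd_pow_self p (by omega)) ⟨B₂, eB.symm⟩
      have := Nat.dvd_gcd hpa hpb
      rw [hAB.gcd_eq_one] at this
      exact hp.one_lt.ne' (Nat.eq_one_of_dvd_one this)
    -- prime power part
    have hdvd1 : ((p:ℤ)^i * (p:ℤ)^j) ∣ ((A:ℤ) * (B:ℤ)) := by
      apply mul_dvd_mul
      · exact_mod_cast Int.natCast_dvd_natCast.mpr (⟨A₂, eA.symm⟩ : (p^i : ℕ) ∣ A)
      · exact_mod_cast Int.natCast_dvd_natCast.mpr (⟨B₂, eB.symm⟩ : (p^j : ℕ) ∣ B)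
    have hdvd2 : ((A₂:ℤ) * (B₂:ℤ)) ∣ ((A:ℤ) * (B:ℤ)) := by
      apply mul_dvd_mul
      · exact Int.natCast_dvd_natCast.mpr ⟨p^i, by rw [← eA]; ring⟩
      · exact Int.natCast_dvd_natCast.mpr ⟨p^j, by rw [← eB]; ring⟩
    have hC1 : IsCoprime C ((p:ℤ)^i * (p:ℤ)^j) := hC.of_isCoprime_of_dvd_right hdvd1
    have hC2 : IsCoprime C ((A₂:ℤ) * (B₂:ℤ)) := hC.of_isCoprime_of_dvd_right hdvd2
    have hprime2 : Prime (2:ℤ) := Int.prime_two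
    have habint : (A:ℤ) * (B:ℤ) * C = ((p:ℤ)^i * (p:ℤ)^j * C) * ((A₂:ℤ) * (B₂:ℤ)) := by
      rw [← eA, ← eB]; push_cast; ring
    have hpar1 : Odd (p^(i+(j+l))) ∨ (2:ℤ) ∣ (p:ℤ)^i * (p:ℤ)^j * C := by
      rcases hpar with ho | he
      · exact Or.inl (oddd ⟨m₂, em.symm⟩ ho)
      · by_cases hp2 : p = 2
        · right
          rw [habint] at he
          rcases hprime2.dvd_mul.mp he with h | h
          · exact h
          · exfalso
            rcases hprime2.dvd_mul.mp h with h | h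
            · have : (2:ℕ) ∣ A₂ := by exact_mod_cast h
              rw [← hp2] at this
              exact Nat.not_dvd_ordCompl hp hA0 this
            · have : (2:ℕ) ∣ B₂ := by exact_mod_cast h
              rw [← hp2] at this
              exact Nat.not_dvd_ordCompl hp hB0 this
        · left
          exact (hp.odd_of_ne_two hp2).pow
    have hpnot2 : ∀ (k:ℕ), p ≠ 2 → ¬ (2:ℤ) ∣ (p:ℤ)^k := by
      intro k hp2 hd
      have h0 : (2:ℕ) ∣ p^k := by exact_mod_cast hd
      have h2 := Nat.prime_two.dvd_of_dvd_pow h0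
      exact hp2 ((Nat.prime_dvd_prime_iff_eq Nat.prime_two hp).mp h2).symm
    have hpar2 : Odd m₂ ∨ (2:ℤ) ∣ (A₂:ℤ) * (B₂:ℤ) * C := by
      rcases hpar with ho | he
      · exact Or.inl (oddd ⟨p ^ (i + (j+l)), by rw [← em]; ring⟩ ho)
      · by_cases hp2 : p = 2
        · left
          rw [hp2] at hndvd
          rw [Nat.odd_iff]
          omega
        · right
          have habint2 : (A:ℤ) * (B:ℤ) * C = ((p:ℤ)^(i+j)) * ((A₂:ℤ) * (B₂:ℤ) * C) := by
            rw [← eA, ← eB]; push_cast [pow_add]; ring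
          rw [habint2] at he
          rcases hprime2.dvd_mul.mp he with h | h
          · exact absurd h (hpnot2 _ hp2)
          · exact h
    obtain ⟨X₁, Y₁, hX₁, hY₁, h₁⟩ := keyPP p i j l hp hij C hC1 hpar1
    have hA₂B₂ : Nat.Coprime A₂ B₂ :=
      Nat.Coprime.coprime_dvd_left (Nat.ordCompl_dvd A p)
        (hAB.coprime_dvd_right (Nat.ordCompl_dvd B p))
    obtain ⟨X₂, Y₂, hX₂, hY₂, h₂⟩ := IH m₂ hm2lt A₂ B₂ r₂ hm2pos em2 hA₂B₂ C hC2 hpar2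
    obtain ⟨X, Y, cX, cY, hdvd⟩ := combine (p^(i+(j+l))) m₂ (p^i) A₂ (p^j) B₂ (p^l) r₂
      C X₁ Y₁ X₂ Y₂ hcopm (by rw [pow_add, pow_add]; ring) em2
      (by push_cast; exact hX₁) (by push_cast; exact hY₁) (by push_cast; exact h₁)
      hX₂ hY₂ h₂
    refine ⟨X, Y, ?_, ?_, ?_⟩
    · have hrw : ((B:ℤ)*(r:ℤ)) = ((p^j:ℕ):ℤ)*((p^l:ℕ):ℤ)*(((B₂:ℕ):ℤ)*((r₂:ℕ):ℤ)) := by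
        rw [← eB, ← er]; push_cast; ring
      rw [hrw]; exact cX
    · have hrw : ((A:ℤ)*(r:ℤ)) = ((p^i:ℕ):ℤ)*((p^l:ℕ):ℤ)*(((A₂:ℕ):ℤ)*((r₂:ℕ):ℤ)) := by
        rw [← eA, ← er]; push_cast; ring
      rw [hrw]; exact cY
    · have hrw1 : (m:ℤ) = ((p^(i+(j+l)):ℕ):ℤ)*((m₂:ℕ):ℤ) := by rw [← em]; push_cast; ring
      have hrw2 : (A:ℤ)*X + (B:ℤ)*Y - C =
          ((p^i:ℕ):ℤ)*((A₂:ℕ):ℤ)*X + ((p^j:ℕ):ℤ)*((B₂:ℕ):ℤ)*Y - C := by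
        rw [← eA, ← eB]; push_cast; ring
      rw [hrw1, hrw2]; exact hdvd

private lemma extract (q : ℕ) (hq : 0 < q) (X : ℤ) (h : IsCoprime X (q:ℤ)) :
    ∃ x : ℕ, 1 ≤ x ∧ x ≤ q ∧ Nat.Coprime x q ∧ (q:ℤ) ∣ X - (x:ℤ) := by
  set X' := X % (q:ℤ) with hX'
  have hq0 : (q:ℤ) ≠ 0 := by exact_mod_cast hq.ne'
  have hnn : 0 ≤ X' := Int.emod_nonneg X hq0
  have hlt : X' < q := Int.emod_lt_of_pos X (by exact_mod_cast hq)
  have hdvd : (q:ℤ) ∣ X - X' := ⟨X / q, by rw [hX', Int.emod_def]; ring⟩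
  by_cases h0 : X' = 0
  · have hq1 : q = 1 := by
      have : (q:ℤ) ∣ X := by
        have := hdvd; rw [h0, sub_zero] at this; exact this
      have hu : IsUnit ((q:ℤ)) := h.isUnit_of_dvd' this dvd_rfl
      rw [Int.isUnit_iff] at hu
      omega
    refine ⟨1, le_refl 1, by omega, by simp [hq1], ?_⟩
    rw [hq1]; exact one_dvd _
  · refine ⟨X'.toNat, by omega, by omega, ?_, ?_⟩
    · have hcop : IsCoprime X' ((q:ℕ):ℤ) := copr_trans (dvd_sub_comm.mp hdvd) h
      have : ((X'.toNat : ℕ) : ℤ) = X' := Int.toNat_of_nonneg hnn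
      rw [← this] at hcop
      exact Nat.isCoprime_iff_coprime.mp hcop
    · have : ((X'.toNat : ℕ) : ℤ) = X' := Int.toNat_of_nonneg hnn
      rw [this]; exact hdvd
theorem stmt_16 (n a b : ℕ) (hn : 0 < n) (ha : a ∣ n) (hb : b ∣ n)
    (g : ℕ) (hg : g = Nat.gcd a b) (c : ZMod n) :
    (∃ u v : ZMod n,
      u ∈ {z : ZMod n | ∃ x : ℕ, 1 ≤ x ∧ x ≤ n / a ∧ Nat.Coprime x (n / a) ∧
        z = (a : ZMod n) * x} ∧
      v ∈ {z : ZMod n | ∃ y : ℕ, 1 ≤ y ∧ y ≤ n / b ∧ Nat.Coprime y (n / b) ∧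
        z = (b : ZMod n) * y} ∧
      u + v = c) ↔
    (g ∣ c.val ∧ Nat.Coprime (c.val / g) ((a / g) * (b / g)) ∧
      (Odd (n / g) ∨ Even ((a / g) * (b / g) * (c.val / g)))) := by
  haveI : NeZero n := ⟨hn.ne'⟩
  have ha0 : 0 < a := Nat.pos_of_dvd_of_pos ha hn
  have hb0 : 0 < b := Nat.pos_of_dvd_of_pos hb hn
  have hg0 : 0 < g := by rw [hg]; exact Nat.gcd_pos_of_pos_left b ha0
  have hga : g ∣ a := by rw [hg]; exact Nat.gcd_dvd_left a b
  have hgb : g ∣ b := by rw [hg]; exact Nat.gcd_dvd_right a b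
  have hgn : g ∣ n := dvd_trans hga ha
  set a' := a / g with ha'
  set b' := b / g with hb'
  set n' := n / g with hn'
  set c' := c.val / g with hc'
  have ea : g * a' = a := Nat.mul_div_cancel' hga
  have eb : g * b' = b := Nat.mul_div_cancel' hgb
  have en : g * n' = n := Nat.mul_div_cancel' hgn
  have hn'0 : 0 < n' := by
    rcases Nat.eq_zero_or_pos n' with h | h
    · rw [h, mul_zero] at en; omega
    · exact h
  have hcop : Nat.Coprime a' b' := by
    rw [ha', hb', hg]; exact Nat.coprime_div_gcd_div_gcd (hg ▸ hg0)
  have hlcm : a' * b' ∣ n' := by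
    have h1 : Nat.lcm a b ∣ n := Nat.lcm_dvd ha hb
    have h2 : Nat.lcm a b = g * (a' * b') := by
      apply Nat.eq_of_mul_eq_mul_left hg0
      have h3 : g * Nat.lcm a b = a * b := by rw [hg]; exact Nat.gcd_mul_lcm a b
      rw [h3, ← ea, ← eb]; ring
    rw [h2, ← en] at h1
    exact (mul_dvd_mul_iff_left hg0.ne').mp h1
  set r := n' / (a' * b') with hr
  have er : a' * b' * r = n' := Nat.mul_div_cancel' hlcm
  have hna : n / a = b' * r := by
    have h1 : n = a * (b' * r) := by rw [← en, ← er, ← ea]; ring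
    rw [h1, Nat.mul_div_cancel_left _ ha0]
  have hnb : n / b = a' * r := by
    have h1 : n = b * (a' * r) := by rw [← en, ← er, ← eb]; ring
    rw [h1, Nat.mul_div_cancel_left _ hb0]
  have hc : ((c.val : ℕ) : ZMod n) = c := by rw [ZMod.natCast_val, ZMod.cast_id]
  constructor
  · rintro ⟨u, v, ⟨x, hx1, hx2, hx3, rfl⟩, ⟨y, hy1, hy2, hy3, rfl⟩, hsum⟩
    have hcast : ((a * x + b * y : ℕ) : ZMod n) = ((c.val : ℕ) : ZMod n) := by
      rw [hc]; push_cast; exact hsum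
    have hmodeq : (a * x + b * y) ≡ c.val [MOD n] := (ZMod.natCast_eq_natCast_iff _ _ _).mp hcast
    have hint : (n:ℤ) ∣ ((a:ℤ) * x + (b:ℤ) * y - (c.val:ℤ)) := by
      have := (Nat.modEq_iff_dvd).mp hmodeq
      have h2 : (n:ℤ) ∣ ((a*x+b*y : ℕ) : ℤ) - ((c.val : ℕ):ℤ) := dvd_sub_comm.mp (by exact_mod_cast this)
      push_cast at h2
      convert h2 using 1
    -- (i) g ∣ c.val
    have hgxy : (g:ℤ) ∣ ((a:ℤ) * x + (b:ℤ) * y) := by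
      apply dvd_add
      · exact Dvd.dvd.mul_right (Int.natCast_dvd_natCast.mpr hga) _
      · exact Dvd.dvd.mul_right (Int.natCast_dvd_natCast.mpr hgb) _
    have hgc : g ∣ c.val := by
      have h1 : (g:ℤ) ∣ (c.val:ℤ) := by
        have h2 : (g:ℤ) ∣ ((a:ℤ) * x + (b:ℤ) * y - (c.val:ℤ)) :=
          dvd_trans (Int.natCast_dvd_natCast.mpr hgn) hint
        have := dvd_sub hgxy h2
        simpa using this
      exact_mod_cast h1
    have ec : g * c' = c.val := Nat.mul_div_cancel' hgc
    have hint2 : (n':ℤ) ∣ ((a':ℤ) * x + (b':ℤ) * y - (c':ℤ)) := by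
      have h1 : ((g:ℤ) * n') ∣ ((g:ℤ) * ((a':ℤ) * x + (b':ℤ) * y - (c':ℤ))) := by
        have e2 : ((g:ℤ) * ((a':ℤ) * x + (b':ℤ) * y - (c':ℤ)))
            = ((a:ℤ) * x + (b:ℤ) * y - (c.val:ℤ)) := by
          rw [← ea, ← eb, ← ec]; push_cast; ring
        have e3 : ((g:ℤ) * (n':ℤ)) = (n:ℤ) := by rw [← en]; push_cast; ring
        rw [e2, e3]; exact hint
      exact (mul_dvd_mul_iff_left (by exact_mod_cast hg0.ne' : (g:ℤ) ≠ 0)).mp h1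
    have ha'n : (a':ℤ) ∣ (n':ℤ) := Int.natCast_dvd_natCast.mpr ⟨b'*r, by rw [← er]; ring⟩
    have hb'n : (b':ℤ) ∣ (n':ℤ) := Int.natCast_dvd_natCast.mpr ⟨a'*r, by rw [← er]; ring⟩
    -- gcd c' a' = 1
    have hca : Nat.Coprime c' a' := by
      set d := Nat.gcd c' a' with hd
      have hd1 : (d:ℤ) ∣ (c':ℤ) := Int.natCast_dvd_natCast.mpr (Nat.gcd_dvd_left _ _)
      have hd2 : (d:ℤ) ∣ (a':ℤ) := Int.natCast_dvd_natCast.mpr (Nat.gcd_dvd_right _ _)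
      have hd3 : (d:ℤ) ∣ ((b':ℤ) * y) := by
        have h4 : (d:ℤ) ∣ ((a':ℤ) * x + (b':ℤ) * y - (c':ℤ)) :=
          dvd_trans (dvd_trans hd2 ha'n) hint2
        have h5 := dvd_add (dvd_sub h4 (hd2.mul_right (x:ℤ))) hd1
        convert h5 using 1; rfl; ring
      have hdb : Nat.Coprime d b' :=
        Nat.Coprime.coprime_dvd_left (Nat.gcd_dvd_right c' a') hcop
      have hdy : (d:ℤ) ∣ (y:ℤ) :=
        (Nat.isCoprime_iff_coprime.mpr hdb).dvd_of_dvd_mul_left hd3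
      have hdy' : d ∣ y := by exact_mod_cast hdy
      have hdnb : d ∣ (n / b) := by
        rw [hnb]; exact Dvd.dvd.mul_right (Nat.gcd_dvd_right c' a') r
      have : d ∣ 1 := by
        rw [← hy3]; exact Nat.dvd_gcd hdy' hdnb
      exact Nat.dvd_one.mp this
    have hcb : Nat.Coprime c' b' := by
      set d := Nat.gcd c' b' with hd
      have hd1 : (d:ℤ) ∣ (c':ℤ) := Int.natCast_dvd_natCast.mpr (Nat.gcd_dvd_left _ _)
      have hd2 : (d:ℤ) ∣ (b':ℤ) := Int.natCast_dvd_natCast.mpr (Nat.gcd_dvd_right _ _)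
      have hd3 : (d:ℤ) ∣ ((a':ℤ) * x) := by
        have h4 : (d:ℤ) ∣ ((a':ℤ) * x + (b':ℤ) * y - (c':ℤ)) :=
          dvd_trans (dvd_trans hd2 hb'n) hint2
        have h5 := dvd_add (dvd_sub h4 (hd2.mul_right (y:ℤ))) hd1
        convert h5 using 1; rfl; ring
      have hdb : Nat.Coprime d a' :=
        Nat.Coprime.coprime_dvd_left (Nat.gcd_dvd_right c' b') hcop.symm
      have hdx : (d:ℤ) ∣ (x:ℤ) :=
        (Nat.isCoprime_iff_coprime.mpr hdb).dvd_of_dvd_mul_left hd3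
      have hdx' : d ∣ x := by exact_mod_cast hdx
      have hdna : d ∣ (n / a) := by
        rw [hna]; exact Dvd.dvd.mul_right (Nat.gcd_dvd_right c' b') r
      have : d ∣ 1 := by
        rw [← hx3]; exact Nat.dvd_gcd hdx' hdna
      exact Nat.dvd_one.mp this
    refine ⟨hgc, Nat.Coprime.mul_right hca hcb, ?_⟩
    rcases Nat.even_or_odd n' with hev | hod
    · right
      by_cases hab2 : Even (a' * b')
      · exact hab2.mul_right c'
      · have hab2' : Odd (a' * b') := Nat.not_even_iff_odd.mp hab2
        obtain ⟨hoa, hob⟩ := Nat.odd_mul.mp hab2'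
        have hre : r % 2 = 0 := by
          have h3 : (a' * b' * r) % 2 = n' % 2 := by rw [er]
          rw [Nat.mul_mod, Nat.odd_iff.mp hab2', Nat.even_iff.mp hev] at h3
          omega
        have hxodd : Odd x := by
          rcases Nat.even_or_odd x with hx | hx
          · exfalso
            have h1 : 2 ∣ Nat.gcd x (n / a) := by
              refine Nat.dvd_gcd ?_ ?_
              · exact hx.two_dvd
              · rw [hna]; exact Dvd.dvd.mul_left ⟨r/2, by omega⟩ b'
            rw [hx3] at h1; omega
          · exact hx
        have hyodd : Odd y := by
          rcases Nat.even_or_odd y with hy | hy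
          · exfalso
            have h1 : 2 ∣ Nat.gcd y (n / b) := by
              refine Nat.dvd_gcd ?_ ?_
              · exact hy.two_dvd
              · rw [hnb]; exact Dvd.dvd.mul_left ⟨r/2, by omega⟩ a'
            rw [hy3] at h1; omega
          · exact hy
        obtain ⟨k, hk⟩ := hint2
        have heven : Even ((c':ℕ):ℤ) := by
          rw [show ((c':ℕ):ℤ) = (a':ℤ) * x + (b':ℤ) * y - (n':ℤ) * k from by linarith]
          refine Even.sub ?_ ?_
          · exact Odd.add_odd
              ((by exact_mod_cast hoa : Odd ((a':ℕ):ℤ)).mul (by exact_mod_cast hxodd))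
              ((by exact_mod_cast hob : Odd ((b':ℕ):ℤ)).mul (by exact_mod_cast hyodd))
          · exact ((by exact_mod_cast hev : Even ((n':ℕ):ℤ))).mul_right k
        have : Even c' := by exact_mod_cast heven
        exact this.mul_left (a' * b')
    · exact Or.inl hod
  · rintro ⟨hgc, hco, hpar⟩
    have ec : g * c' = c.val := Nat.mul_div_cancel' hgc
    have hC : IsCoprime ((c':ℕ):ℤ) ((a':ℤ) * (b':ℤ)) := by
      have h1 := Nat.isCoprime_iff_coprime.mpr hco
      push_cast at h1; exact h1
    have hpar' : Odd n' ∨ (2:ℤ) ∣ (a':ℤ) * (b':ℤ) * ((c':ℕ):ℤ) := by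
      rcases hpar with h | h
      · exact Or.inl h
      · right
        have h1 : (2:ℕ) ∣ a' * b' * c' := h.two_dvd
        have h2 := Int.natCast_dvd_natCast.mpr h1
        push_cast at h2
        exact h2
    obtain ⟨X, Y, hX, hY, hd⟩ := key_s16 n' a' b' r hn'0 er hcop ((c':ℕ):ℤ) hC hpar'
    have hqa : 0 < n / a := Nat.div_pos (Nat.le_of_dvd hn ha) ha0
    have hqb : 0 < n / b := Nat.div_pos (Nat.le_of_dvd hn hb) hb0
    have hXq : IsCoprime X ((n/a : ℕ):ℤ) := by
      rw [hna]; push_cast; exact hX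
    have hYq : IsCoprime Y ((n/b : ℕ):ℤ) := by
      rw [hnb]
      have : ((a' * r : ℕ):ℤ) = (a':ℤ) * (r:ℤ) := by push_cast; ring
      rw [this]; exact hY
    obtain ⟨x, hx1, hx2, hx3, hx4⟩ := extract (n/a) hqa X hXq
    obtain ⟨y, hy1, hy2, hy3, hy4⟩ := extract (n/b) hqb Y hYq
    have hfinal : (n:ℤ) ∣ ((a:ℤ) * x + (b:ℤ) * y - (c.val:ℤ)) := by
      have d1 : (n':ℤ) ∣ (a':ℤ) * ((x:ℤ) - X) := by
        have e5 : (n':ℤ) = (a':ℤ) * ((b' * r : ℕ):ℤ) := by rw [← er]; push_cast; ring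
        rw [e5]
        refine mul_dvd_mul_left _ ?_
        rw [← hna]
        exact dvd_sub_comm.mp hx4
      have d2 : (n':ℤ) ∣ (b':ℤ) * ((y:ℤ) - Y) := by
        have e5 : (n':ℤ) = (b':ℤ) * ((a' * r : ℕ):ℤ) := by rw [← er]; push_cast; ring
        rw [e5]
        refine mul_dvd_mul_left _ ?_
        rw [← hnb]
        exact dvd_sub_comm.mp hy4
      have h1 : (n':ℤ) ∣ ((a':ℤ) * x + (b':ℤ) * y - ((c':ℕ):ℤ)) := by
        have h2 := dvd_add (dvd_add hd d1) d2
        convert h2 using 1; rfl; ring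
      have e3 : (n:ℤ) = (g:ℤ) * (n':ℤ) := by rw [← en]; push_cast; ring
      have e4 : (a:ℤ) * x + (b:ℤ) * y - (c.val:ℤ)
          = (g:ℤ) * ((a':ℤ) * x + (b':ℤ) * y - ((c':ℕ):ℤ)) := by
        rw [← ea, ← eb, ← ec]; push_cast; ring
      rw [e3, e4]; exact mul_dvd_mul_left _ h1
    refine ⟨(a : ZMod n) * x, (b : ZMod n) * y, ⟨x, hx1, hx2, hx3, rfl⟩,
      ⟨y, hy1, hy2, hy3, rfl⟩, ?_⟩
    have hfin2 : ((a * x + b * y : ℕ) : ZMod n) = ((c.val : ℕ) : ZMod n) := by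
      rw [ZMod.natCast_eq_natCast_iff, Nat.modEq_iff_dvd]
      push_cast
      exact dvd_sub_comm.mp hfinal
    rw [hc] at hfin2
    push_cast at hfin2
    exact hfin2
end

section
/- Let n be a positive integer with divisors a and b, and let I be an additive subgroup (ideal) of ℤ/nℤ. Then the number of representations c = u + v with u ∈ atom(a), v ∈ atom(b) is the same for all c in the set of generators of I; i.e., N_{n;a,b}(u) = N_{n;a,b}(v) for any two generators u, v of I. -/
open AddSubgroup

lemma mul_mem_zmul {n : ℕ} [NeZero n] (c x : ZMod n) : c * x ∈ zmultiples x := by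
  refine ⟨(c.val : ℤ), ?_⟩
  show ((c.val : ℤ)) • x = c * x
  rw [zsmul_eq_mul]
  push_cast
  rw [ZMod.natCast_val, ZMod.cast_id]

lemma unit_zmul {n : ℕ} [NeZero n] (t : (ZMod n)ˣ) (x : ZMod n) :
    zmultiples ((t : ZMod n) * x) = zmultiples x := by
  apply le_antisymm
  · rw [zmultiples_le]; exact mul_mem_zmul _ _
  · rw [zmultiples_le]
    have := mul_mem_zmul ((t⁻¹ : (ZMod n)ˣ) : ZMod n) ((t : ZMod n) * x)
    rwa [← mul_assoc, Units.inv_mul, one_mul] at this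

lemma exists_unit_mul {n : ℕ} [NeZero n] {u v : ZMod n}
    (h : zmultiples u = zmultiples v) :
    ∃ t : (ZMod n)ˣ, (t : ZMod n) * u = v := by
  obtain ⟨k, hk'⟩ : v ∈ zmultiples u := h ▸ mem_zmultiples v
  obtain ⟨l, hl'⟩ : u ∈ zmultiples v := h.symm ▸ mem_zmultiples u
  have hk : k • u = v := hk'
  have hl : l • v = u := hl'
  set d := addOrderOf u with hdd
  have hd : d ∣ n := by
    have := addOrderOf_dvd_card (x := u)
    rwa [ZMod.card] at this
  haveI : NeZero d := ⟨(addOrderOf_pos u).ne'⟩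
  have h1 : ((l * k - 1) : ℤ) • u = 0 := by
    rw [sub_smul, one_smul, mul_smul, hk, hl, sub_self]
  have hdvd : (d : ℤ) ∣ (l * k - 1) := addOrderOf_dvd_iff_zsmul_eq_zero.mpr h1
  have hunit : IsUnit ((k : ZMod d)) := by
    refine IsUnit.of_mul_eq_one (l : ZMod d) ?_
    have : ((l * k - 1 : ℤ) : ZMod d) = 0 := (ZMod.intCast_zmod_eq_zero_iff_dvd _ _).mpr hdvd
    push_cast at this
    linear_combination this
  obtain ⟨t, ht⟩ := ZMod.unitsMap_surjective hd hunit.unit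
  refine ⟨t, ?_⟩
  have hcast : ZMod.castHom hd (ZMod d) ((t : ZMod n) - (k : ZMod n)) = 0 := by
    rw [map_sub, map_intCast]
    have : (ZMod.castHom hd (ZMod d)) (t : ZMod n) = (hunit.unit : ZMod d) := by
      have := congrArg (Units.val) ht
      simpa [ZMod.unitsMap_def] using this
    rw [this, IsUnit.unit_spec, sub_self]
  set c := (t : ZMod n) - (k : ZMod n) with hc
  have hcd : d ∣ c.val := by
    rwa [ZMod.castHom_apply, ← ZMod.natCast_val, ZMod.natCast_eq_zero_iff] at hcast
  have hcu : c * u = 0 := by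
    have : c.val • u = 0 := addOrderOf_dvd_iff_nsmul_eq_zero.mp (hdd ▸ hcd)
    rwa [nsmul_eq_mul, ZMod.natCast_val, ZMod.cast_id] at this
  have ht2 : (t : ZMod n) * u = (k : ZMod n) * u :=
    sub_eq_zero.mp (by rw [← sub_mul]; exact hcu)
  rw [ht2, ← zsmul_eq_mul]
  exact hk

theorem stmt_17 (n a b : ℕ) (hn : 0 < n) (ha : a ∣ n) (hb : b ∣ n)
    (I : AddSubgroup (ZMod n))
    (N : ZMod n → ℕ)
    (hN : ∀ c : ZMod n, N c = Nat.card {p : ZMod n × ZMod n //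
      AddSubgroup.zmultiples p.1 = AddSubgroup.zmultiples (a : ZMod n) ∧
      AddSubgroup.zmultiples p.2 = AddSubgroup.zmultiples (b : ZMod n) ∧
      p.1 + p.2 = c})
    (u v : ZMod n) (hu : AddSubgroup.zmultiples u = I)
    (hv : AddSubgroup.zmultiples v = I) :
    N u = N v := by
  haveI : NeZero n := ⟨hn.ne'⟩
  obtain ⟨t, ht⟩ := exists_unit_mul (hu.trans hv.symm)
  rw [hN u, hN v]
  refine Nat.card_congr ⟨
    fun p => ⟨((t : ZMod n) * p.1.1, (t : ZMod n) * p.1.2),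
      by rw [unit_zmul]; exact p.2.1,
      by rw [unit_zmul]; exact p.2.2.1,
      by rw [← mul_add, p.2.2.2, ht]⟩,
    fun p => ⟨(((t⁻¹ : (ZMod n)ˣ) : ZMod n) * p.1.1, ((t⁻¹ : (ZMod n)ˣ) : ZMod n) * p.1.2),
      by rw [unit_zmul]; exact p.2.1,
      by rw [unit_zmul]; exact p.2.2.1,
      by rw [← mul_add, p.2.2.2, ← ht, ← mul_assoc, Units.inv_mul, one_mul]⟩,
    fun p => by
      ext <;> simp [← mul_assoc],
    fun p => by
      ext <;> simp [← mul_assoc]⟩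
end

section
/- Let n be a positive integer with divisors a and b, g = gcd(a,b), n' = n/g, a' = a/g, b' = b/g, and suppose n' is odd or a'b' is even. Let m̃₃ be the largest divisor of n'/(a'b') coprime to a'b'. Then atom(a) + atom(b) = ⋃_{d ∣ m̃₃} atom(g·d), a disjoint union over the divisors d of m̃₃. -/
lemma mem_zmul_iff (n : ℕ) (hn : 0 < n) (x y : ZMod n) :
    x ∈ AddSubgroup.zmultiples y ↔ Nat.gcd n y.val ∣ x.val := by
  haveI : NeZero n := ⟨hn.ne'⟩
  constructor
  · rintro ⟨k, rfl⟩
    have he : 0 < Nat.gcd n y.val := Nat.gcd_pos_of_pos_left _ hn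
    haveI : NeZero (Nat.gcd n y.val) := ⟨he.ne'⟩
    have hdvd : Nat.gcd n y.val ∣ n := Nat.gcd_dvd_left _ _
    let ψ := ZMod.castHom hdvd (ZMod (Nat.gcd n y.val))
    have hy : ψ y = 0 := by
      have h0 : ((y.val : ℕ) : ZMod (Nat.gcd n y.val)) = 0 :=
        (ZMod.natCast_eq_zero_iff _ _).2 (Nat.gcd_dvd_right _ _)
      have h2 : ψ y = ((y.val : ℕ) : ZMod (Nat.gcd n y.val)) := by
        rw [show ψ y = ZMod.cast y from ZMod.castHom_apply y, ← ZMod.natCast_val]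
      rw [h2, h0]
    have h1 : ψ (k • y) = 0 := by rw [map_zsmul, hy, smul_zero]
    have h3 : (((k • y).val : ℕ) : ZMod (Nat.gcd n y.val)) = 0 := by
      rw [show ((k • y).val : ZMod (Nat.gcd n y.val)) = ψ (k • y) by
        rw [show ψ (k • y) = ZMod.cast (k • y) from ZMod.castHom_apply _,
          ← ZMod.natCast_val]]
      exact h1
    exact (ZMod.natCast_eq_zero_iff _ _).1 h3
  · intro h
    have hgen : ((Nat.gcd n y.val : ℕ) : ZMod n) ∈ AddSubgroup.zmultiples y := by
      refine ⟨Nat.gcdB n y.val, ?_⟩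
      have hb := Nat.gcd_eq_gcd_ab n y.val
      have : ((Nat.gcd n y.val : ℕ) : ZMod n) =
          ((((n : ℤ) * Nat.gcdA n y.val + (y.val : ℤ) * Nat.gcdB n y.val) : ℤ) : ZMod n) := by
        rw [← hb]; push_cast; ring
      rw [this]
      push_cast
      simp only [ZMod.natCast_self, zero_mul, zero_add, ZMod.natCast_val, ZMod.intCast_cast,
        ZMod.cast_id]
      rw [zsmul_eq_mul]
      push_cast
      ring
    obtain ⟨c, hc⟩ := h
    have hx : x = (c : ℕ) • ((Nat.gcd n y.val : ℕ) : ZMod n) := by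
      rw [show x = ((x.val : ℕ) : ZMod n) from (ZMod.natCast_rightInverse x).symm, hc]
      push_cast
      ring
    rw [hx]
    exact AddSubgroup.nsmul_mem _ hgen c

lemma zmul_eq_iff (n : ℕ) (hn : 0 < n) (x y : ZMod n) :
    AddSubgroup.zmultiples x = AddSubgroup.zmultiples y ↔
      Nat.gcd n x.val = Nat.gcd n y.val := by
  constructor
  · intro h
    have h1 : x ∈ AddSubgroup.zmultiples y := h ▸ AddSubgroup.mem_zmultiples x
    have h2 : y ∈ AddSubgroup.zmultiples x := h.symm ▸ AddSubgroup.mem_zmultiples y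
    rw [mem_zmul_iff n hn] at h1 h2
    exact Nat.dvd_antisymm
      (Nat.dvd_gcd (Nat.gcd_dvd_left _ _) h2) (Nat.dvd_gcd (Nat.gcd_dvd_left _ _) h1)
  · intro h
    ext z
    rw [mem_zmul_iff n hn, mem_zmul_iff n hn, h]

lemma val_natCast_gcd (n : ℕ) (hn : 0 < n) (c : ℕ) :
    Nat.gcd n ((c : ZMod n)).val = Nat.gcd n c := by
  haveI : NeZero n := ⟨hn.ne'⟩
  rw [ZMod.val_natCast]
  conv_rhs => rw [Nat.gcd_rec, Nat.gcd_comm]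

lemma atom_char (n : ℕ) (hn : 0 < n) (x : ZMod n) (c : ℕ) :
    AddSubgroup.zmultiples x = AddSubgroup.zmultiples ((c : ℕ) : ZMod n) ↔
      Nat.gcd n x.val = Nat.gcd n c := by
  rw [zmul_eq_iff n hn, val_natCast_gcd n hn]

lemma isUnit_iff_coprime_val (m : ℕ) [NeZero m] (z : ZMod m) :
    IsUnit z ↔ Nat.Coprime z.val m := by
  rw [← ZMod.isUnit_iff_coprime, ZMod.natCast_val, ZMod.cast_id]

lemma sum_two_units_odd : ∀ m : ℕ, Odd m → ∀ y : ZMod m,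
    ∃ u v : ZMod m, IsUnit u ∧ IsUnit v ∧ u + v = y := by
  refine Nat.recOnPosPrimePosCoprime ?_ ?_ ?_ ?_
  · -- prime powers
    intro p k hp hk hodd y
    haveI : NeZero (p ^ k) := ⟨pow_ne_zero k hp.pos.ne'⟩
    haveI : Fact p.Prime := ⟨hp⟩
    have hpodd : p ≠ 2 := by
      rintro rfl
      have h2 := Nat.odd_iff.mp hodd
      rw [Nat.pow_mod] at h2
      simp [hk.ne'] at h2
    have unit_iff : ∀ z : ZMod (p ^ k), IsUnit z ↔ ¬ (p ∣ z.val) := by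
      intro z
      rw [isUnit_iff_coprime_val, Nat.coprime_pow_right_iff hk,
        Nat.coprime_comm, hp.coprime_iff_not_dvd]
    by_cases h1 : IsUnit (y - 1)
    · exact ⟨1, y - 1, isUnit_one, h1, by ring⟩
    · refine ⟨-1, y + 1, isUnit_one.neg, ?_, by ring⟩
      rw [unit_iff] at h1 ⊢
      push_neg at h1
      intro h2
      set φ := ZMod.castHom (dvd_pow_self p hk.ne') (ZMod p) with hφ
      have hz : ∀ z : ZMod (p ^ k), p ∣ z.val → φ z = 0 := by
        intro z hd
        rw [hφ, ZMod.castHom_apply, ← ZMod.natCast_val]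
        exact (ZMod.natCast_eq_zero_iff _ _).2 hd
      have e1 : φ (y - 1) = 0 := hz _ h1
      have e2 : φ (y + 1) = 0 := hz _ h2
      have : (2 : ZMod p) = 0 := by
        have := sub_eq_zero.mpr (e2.trans e1.symm)
        rw [← map_sub] at this
        have h3 : (y + 1) - (y - 1) = (2 : ZMod (p ^ k)) := by ring
        rwa [h3, map_ofNat] at this
      have : p ∣ 2 := by
        have := (ZMod.natCast_eq_zero_iff 2 p).1 (by exact_mod_cast this)
        exact this
      exact hpodd ((Nat.prime_dvd_prime_iff_eq hp Nat.prime_two).1 this)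
  · intro h; exact absurd h (by simp [Nat.odd_iff])
  · intro _ y; exact ⟨0, 0, isUnit_of_subsingleton 0, isUnit_of_subsingleton 0, Subsingleton.elim _ _⟩
  · intro a b ha hb hco iha ihb hodd y
    obtain ⟨hoa, hob⟩ := Nat.odd_mul.1 hodd
    let e := ZMod.chineseRemainder hco
    obtain ⟨u1, v1, hu1, hv1, h1⟩ := iha hoa (e y).1
    obtain ⟨u2, v2, hu2, hv2, h2⟩ := ihb hob (e y).2
    have hPU : ∀ (w1 : ZMod a) (w2 : ZMod b), IsUnit w1 → IsUnit w2 →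
        IsUnit ((w1, w2) : ZMod a × ZMod b) := by
      rintro w1 w2 ⟨W1, rfl⟩ ⟨W2, rfl⟩
      exact ⟨⟨((W1 : ZMod a), (W2 : ZMod b)), ((↑W1⁻¹ : ZMod a), (↑W2⁻¹ : ZMod b)),
        by ext <;> simp, by ext <;> simp⟩, rfl⟩
    refine ⟨e.symm (u1, u2), e.symm (v1, v2), ?_, ?_, ?_⟩
    · exact e.symm.toRingHom.isUnit_map (hPU _ _ hu1 hu2)
    · exact e.symm.toRingHom.isUnit_map (hPU _ _ hv1 hv2)
    · have h3 : ((u1, u2) : ZMod a × ZMod b) + (v1, v2) = e y := by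
        ext <;> simp [h1, h2]
      rw [← map_add, h3, RingEquiv.symm_apply_apply]

lemma isUnit_zmod_pow (p k : ℕ) (hp : p.Prime) (hk : 0 < k) (z : ZMod (p ^ k)) :
    IsUnit z ↔ ¬ p ∣ z.val := by
  haveI : NeZero (p ^ k) := ⟨pow_ne_zero k hp.pos.ne'⟩
  rw [isUnit_iff_coprime_val, Nat.coprime_pow_right_iff hk,
    Nat.coprime_comm, hp.coprime_iff_not_dvd]

lemma dvd_val_iff_cast_eq_zero (p k : ℕ) (hp : p.Prime) (hk : 0 < k) (z : ZMod (p ^ k)) :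
    p ∣ z.val ↔ (ZMod.castHom (dvd_pow_self p hk.ne') (ZMod p)) z = 0 := by
  haveI : NeZero (p ^ k) := ⟨pow_ne_zero k hp.pos.ne'⟩
  haveI : Fact p.Prime := ⟨hp⟩
  rw [ZMod.castHom_apply, ← ZMod.natCast_val]
  exact (ZMod.natCast_eq_zero_iff _ _).symm

lemma coreL : ∀ n' : ℕ, 0 < n' → ∀ a' b' y : ℕ, a' ∣ n' → b' ∣ n' →
    Nat.Coprime a' b' → (Odd n' ∨ Even (a' * b')) → Nat.Coprime y (a' * b') →
    ∃ s t : ZMod n', IsUnit s ∧ IsUnit t ∧ a' * s + b' * t = (y : ZMod n') := by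
  refine Nat.recOnPosPrimePosCoprime ?_ ?_ ?_ ?_
  · -- prime power case
    intro p k hp hk _ a' b' y ha hb hco hcase hy
    haveI : NeZero (p ^ k) := ⟨pow_ne_zero k hp.pos.ne'⟩
    have hdvd_p : ∀ c : ℕ, c ∣ p ^ k → c ≠ 1 → p ∣ c := by
      intro c hc hc1
      obtain ⟨j, hj, rfl⟩ := (Nat.dvd_prime_pow hp).1 hc
      rcases Nat.eq_zero_or_pos j with rfl | hjp
      · simp at hc1
      · exact dvd_pow_self p hjp.ne'
    have hyp : p ∣ a' * b' → ¬ p ∣ y := by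
      intro hpd h
      have : p ∣ Nat.gcd y (a' * b') := Nat.dvd_gcd h hpd
      rw [hy] at this
      exact hp.one_lt.ne' (Nat.eq_one_of_dvd_one this ▸ rfl)
    have hunit_sub : ∀ c : ℕ, p ∣ c → ¬ p ∣ y → IsUnit ((y : ZMod (p ^ k)) - c) := by
      intro c hc hyp'
      rw [isUnit_zmod_pow p k hp hk, dvd_val_iff_cast_eq_zero p k hp hk]
      rw [map_sub]
      simp only [map_natCast]
      rw [show ((c : ZMod p)) = 0 from (ZMod.natCast_eq_zero_iff _ _).2 hc, sub_zero]
      exact fun h0 => hyp' ((ZMod.natCast_eq_zero_iff _ _).1 h0)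
    rcases eq_or_ne a' 1 with ha1 | ha1
    · rcases eq_or_ne b' 1 with hb1 | hb1
      · subst ha1 hb1
        have hodd : Odd (p ^ k) := by
          rcases hcase with h | h
          · exact h
          · simp at h
        obtain ⟨u, v, hu, hv, huv⟩ := sum_two_units_odd (p ^ k) hodd (y : ZMod (p ^ k))
        exact ⟨u, v, hu, hv, by push_cast; simpa using huv⟩
      · subst ha1
        have hpb : p ∣ b' := hdvd_p b' hb hb1
        refine ⟨(y : ZMod (p ^ k)) - b', 1, ?_, isUnit_one, by push_cast; ring⟩
        exact hunit_sub b' hpb (hyp (Dvd.dvd.mul_left hpb 1))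
    · have hpa : p ∣ a' := hdvd_p a' ha ha1
      have hb1 : b' = 1 := by
        by_contra hb1
        have hpb : p ∣ b' := hdvd_p b' hb hb1
        have : p ∣ Nat.gcd a' b' := Nat.dvd_gcd hpa hpb
        rw [hco] at this
        exact hp.one_lt.ne' (Nat.eq_one_of_dvd_one this ▸ rfl)
      subst hb1
      refine ⟨1, (y : ZMod (p ^ k)) - a', isUnit_one, ?_, by push_cast; ring⟩
      exact hunit_sub a' hpa (hyp (Dvd.dvd.mul_right hpa 1))
  · intro h; exact absurd h (lt_irrefl 0)
  · intro _ a' b' y _ _ _ _ _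
    exact ⟨0, 0, isUnit_of_subsingleton 0, isUnit_of_subsingleton 0, Subsingleton.elim _ _⟩
  · -- coprime product
    intro n₁ n₂ hn1 hn2 hcop ih1 ih2 hpos a' b' y ha hb hab hcase hy
    obtain ⟨a₁, a₂, ha1, ha2, haeq⟩ := exists_dvd_and_dvd_of_dvd_mul ha
    obtain ⟨b₁, b₂, hb1, hb2, hbeq⟩ := exists_dvd_and_dvd_of_dvd_mul hb
    haveI : NeZero n₁ := ⟨by omega⟩
    haveI : NeZero n₂ := ⟨by omega⟩
    have hda1 : a₁ ∣ a' := haeq ▸ dvd_mul_right a₁ a₂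
    have hda2 : a₂ ∣ a' := haeq ▸ dvd_mul_left a₂ a₁
    have hdb1 : b₁ ∣ b' := hbeq ▸ dvd_mul_right b₁ b₂
    have hdb2 : b₂ ∣ b' := hbeq ▸ dvd_mul_left b₂ b₁
    have hab1 : Nat.Coprime a₁ b₁ :=
      Nat.Coprime.coprime_dvd_left hda1 (Nat.Coprime.coprime_dvd_right hdb1 hab)
    have hab2 : Nat.Coprime a₂ b₂ :=
      Nat.Coprime.coprime_dvd_left hda2 (Nat.Coprime.coprime_dvd_right hdb2 hab)
    have hcase' : (Odd n₁ ∨ Even (a₁ * b₁)) ∧ (Odd n₂ ∨ Even (a₂ * b₂)) := by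
      rcases hcase with h | h
      · rw [Nat.odd_mul] at h; exact ⟨Or.inl h.1, Or.inl h.2⟩
      · rw [haeq, hbeq] at h
        have h2 : (2 : ℕ) ∣ a₁ * a₂ * (b₁ * b₂) := even_iff_two_dvd.1 h
        have := (Nat.Prime.dvd_mul Nat.prime_two).1 h2
        rcases this with h3 | h3
        · rcases (Nat.Prime.dvd_mul Nat.prime_two).1 h3 with h4 | h4
          · refine ⟨Or.inr (even_iff_two_dvd.2 (h4.mul_right b₁)), Or.inl ?_⟩
            rw [← Nat.not_even_iff_odd, even_iff_two_dvd]
            exact fun h5 => Nat.Prime.one_lt Nat.prime_two |>.ne'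
              (Nat.eq_one_of_dvd_one (Nat.dvd_gcd (h4.trans ha1) h5 |>.trans hcop.dvd))
          · refine ⟨Or.inl ?_, Or.inr (even_iff_two_dvd.2 (h4.mul_right b₂))⟩
            rw [← Nat.not_even_iff_odd, even_iff_two_dvd]
            exact fun h5 => Nat.Prime.one_lt Nat.prime_two |>.ne'
              (Nat.eq_one_of_dvd_one (Nat.dvd_gcd h5 (h4.trans ha2) |>.trans hcop.dvd))
        · rcases (Nat.Prime.dvd_mul Nat.prime_two).1 h3 with h4 | h4
          · refine ⟨Or.inr (even_iff_two_dvd.2 (h4.mul_left a₁)), Or.inl ?_⟩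
            rw [← Nat.not_even_iff_odd, even_iff_two_dvd]
            exact fun h5 => Nat.Prime.one_lt Nat.prime_two |>.ne'
              (Nat.eq_one_of_dvd_one (Nat.dvd_gcd (h4.trans hb1) h5 |>.trans hcop.dvd))
          · refine ⟨Or.inl ?_, Or.inr (even_iff_two_dvd.2 (h4.mul_left a₂))⟩
            rw [← Nat.not_even_iff_odd, even_iff_two_dvd]
            exact fun h5 => Nat.Prime.one_lt Nat.prime_two |>.ne'
              (Nat.eq_one_of_dvd_one (Nat.dvd_gcd h5 (h4.trans hb2) |>.trans hcop.dvd))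
    have hy1 : Nat.Coprime y (a₁ * b₁) :=
      Nat.Coprime.coprime_dvd_right (mul_dvd_mul hda1 hdb1) hy
    have hy2 : Nat.Coprime y (a₂ * b₂) :=
      Nat.Coprime.coprime_dvd_right (mul_dvd_mul hda2 hdb2) hy
    obtain ⟨s₁, t₁, hs₁, ht₁, he₁⟩ := ih1 (by omega) a₁ b₁ y ha1 hb1 hab1 hcase'.1 hy1
    obtain ⟨s₂, t₂, hs₂, ht₂, he₂⟩ := ih2 (by omega) a₂ b₂ y ha2 hb2 hab2 hcase'.2 hy2
    -- unit adjustments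
    have hua2 : IsUnit ((a₂ : ZMod n₁)) := (ZMod.isUnit_iff_coprime a₂ n₁).2
      (Nat.Coprime.coprime_dvd_left ha2 hcop.symm)
    have hub2 : IsUnit ((b₂ : ZMod n₁)) := (ZMod.isUnit_iff_coprime b₂ n₁).2
      (Nat.Coprime.coprime_dvd_left hb2 hcop.symm)
    have hua1 : IsUnit ((a₁ : ZMod n₂)) := (ZMod.isUnit_iff_coprime a₁ n₂).2
      (Nat.Coprime.coprime_dvd_left ha1 hcop)
    have hub1 : IsUnit ((b₁ : ZMod n₂)) := (ZMod.isUnit_iff_coprime b₁ n₂).2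
      (Nat.Coprime.coprime_dvd_left hb1 hcop)
    set s₁' : ZMod n₁ := ↑hua2.unit⁻¹ * s₁ with hs1'def
    set t₁' : ZMod n₁ := ↑hub2.unit⁻¹ * t₁ with ht1'def
    set s₂' : ZMod n₂ := ↑hua1.unit⁻¹ * s₂ with hs2'def
    set t₂' : ZMod n₂ := ↑hub1.unit⁻¹ * t₂ with ht2'def
    have hbe₁ : (a' : ZMod n₁) * s₁' + (b' : ZMod n₁) * t₁' = (y : ZMod n₁) := by
      have ea : ((a₂ : ℕ) : ZMod n₁) * ↑hua2.unit⁻¹ = 1 := hua2.mul_val_inv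
      have eb : ((b₂ : ℕ) : ZMod n₁) * ↑hub2.unit⁻¹ = 1 := hub2.mul_val_inv
      rw [hs1'def, ht1'def, haeq, hbeq]
      push_cast
      linear_combination ((a₁ : ZMod n₁) * s₁) * ea + ((b₁ : ZMod n₁) * t₁) * eb + he₁
    have hbe₂ : (a' : ZMod n₂) * s₂' + (b' : ZMod n₂) * t₂' = (y : ZMod n₂) := by
      have ea : ((a₁ : ℕ) : ZMod n₂) * ↑hua1.unit⁻¹ = 1 := hua1.mul_val_inv
      have eb : ((b₁ : ℕ) : ZMod n₂) * ↑hub1.unit⁻¹ = 1 := hub1.mul_val_inv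
      rw [hs2'def, ht2'def, haeq, hbeq]
      push_cast
      linear_combination ((a₂ : ZMod n₂) * s₂) * ea + ((b₂ : ZMod n₂) * t₂) * eb + he₂
    have hs1u : IsUnit s₁' := (hua2.unit⁻¹).isUnit.mul hs₁
    have ht1u : IsUnit t₁' := (hub2.unit⁻¹).isUnit.mul ht₁
    have hs2u : IsUnit s₂' := (hua1.unit⁻¹).isUnit.mul hs₂
    have ht2u : IsUnit t₂' := (hub1.unit⁻¹).isUnit.mul ht₂
    let e := ZMod.chineseRemainder hcop
    have hPU : ∀ (w1 : ZMod n₁) (w2 : ZMod n₂), IsUnit w1 → IsUnit w2 →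
        IsUnit ((w1, w2) : ZMod n₁ × ZMod n₂) := by
      rintro w1 w2 ⟨W1, rfl⟩ ⟨W2, rfl⟩
      exact ⟨⟨((W1 : ZMod n₁), (W2 : ZMod n₂)), ((↑W1⁻¹ : ZMod n₁), (↑W2⁻¹ : ZMod n₂)),
        by ext <;> simp, by ext <;> simp⟩, rfl⟩
    refine ⟨e.symm (s₁', s₂'), e.symm (t₁', t₂'), ?_, ?_, ?_⟩
    · exact e.symm.toRingHom.isUnit_map (hPU _ _ hs1u hs2u)
    · exact e.symm.toRingHom.isUnit_map (hPU _ _ ht1u ht2u)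
    · apply e.injective
      rw [map_add, map_mul, map_mul, map_natCast, map_natCast, map_natCast,
        RingEquiv.apply_symm_apply, RingEquiv.apply_symm_apply]
      ext
      · simpa using hbe₁
      · simpa using hbe₂

theorem stmt_18 (n a b : ℕ) (hn : 0 < n) (ha : a ∣ n) (hb : b ∣ n)
    (g : ℕ) (hg : g = Nat.gcd a b)
    (hcase : Odd (n / g) ∨ Even ((a / g) * (b / g)))
    (m₃ : ℕ)
    (hm₃ : m₃ ∣ (n / g) / ((a / g) * (b / g)) ∧ Nat.Coprime m₃ ((a / g) * (b / g)) ∧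
      ∀ d : ℕ, d ∣ (n / g) / ((a / g) * (b / g)) → Nat.Coprime d ((a / g) * (b / g)) →
        d ≤ m₃) :
    {c : ZMod n | ∃ u v : ZMod n,
        AddSubgroup.zmultiples u = AddSubgroup.zmultiples (a : ZMod n) ∧
        AddSubgroup.zmultiples v = AddSubgroup.zmultiples (b : ZMod n) ∧
        u + v = c} =
      ⋃ d ∈ {d : ℕ | d ∣ m₃},
        {z : ZMod n | AddSubgroup.zmultiples z =
          AddSubgroup.zmultiples ((g * d : ℕ) : ZMod n)} ∧
    ∀ d₁ d₂ : ℕ, d₁ ∣ m₃ → d₂ ∣ m₃ → d₁ ≠ d₂ →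
      Disjoint
        {z : ZMod n | AddSubgroup.zmultiples z =
          AddSubgroup.zmultiples ((g * d₁ : ℕ) : ZMod n)}
        {z : ZMod n | AddSubgroup.zmultiples z =
          AddSubgroup.zmultiples ((g * d₂ : ℕ) : ZMod n)} := by
  haveI : NeZero n := ⟨hn.ne'⟩
  have ha0 : 0 < a := Nat.pos_of_dvd_of_pos ha hn
  have hb0 : 0 < b := Nat.pos_of_dvd_of_pos hb hn
  have hg0 : 0 < g := hg ▸ Nat.gcd_pos_of_pos_left b ha0
  have hga : g ∣ a := hg ▸ Nat.gcd_dvd_left a b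
  have hgb : g ∣ b := hg ▸ Nat.gcd_dvd_right a b
  have hgn : g ∣ n := hga.trans ha
  -- abbreviations
  set n' := n / g with hn'
  set a' := a / g with ha'
  set b' := b / g with hb'
  have hgn' : g * n' = n := Nat.mul_div_cancel' hgn
  have hga' : g * a' = a := Nat.mul_div_cancel' hga
  have hgb' : g * b' = b := Nat.mul_div_cancel' hgb
  have hn'0 : 0 < n' := Nat.div_pos (Nat.le_of_dvd hn hgn) hg0
  have ha'0 : 0 < a' := Nat.div_pos (Nat.le_of_dvd ha0 hga) hg0
  have hb'0 : 0 < b' := Nat.div_pos (Nat.le_of_dvd hb0 hgb) hg0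
  have hdivdiv : ∀ x : ℕ, x ∣ n → g ∣ x → x / g ∣ n' := by
    intro x hxn hgx
    have h1 : g * (x / g * (n / x)) = n := by
      rw [← mul_assoc, Nat.mul_div_cancel' hgx, Nat.mul_div_cancel' hxn]
    have h2 : n / g = x / g * (n / x) := Nat.div_eq_of_eq_mul_left hg0 (by rw [mul_comm]; exact h1.symm)
    exact Dvd.intro _ h2.symm
  have ha'n : a' ∣ n' := hdivdiv a ha hga
  have hb'n : b' ∣ n' := hdivdiv b hb hgb
  have hco : Nat.Coprime a' b' := by
    rw [ha', hb', hg]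
    exact Nat.coprime_div_gcd_div_gcd (hg ▸ hg0)
  have hab'n : a' * b' ∣ n' := Nat.Coprime.mul_dvd_of_dvd_of_dvd hco ha'n hb'n
  set M := n' / (a' * b') with hM
  have hMeq : a' * b' * M = n' := Nat.mul_div_cancel' hab'n
  have hM0 : 0 < M := Nat.div_pos (Nat.le_of_dvd hn'0 hab'n) (by positivity)
  obtain ⟨hm1, hm2, hm3⟩ := hm₃
  have hm₃0 : 0 < m₃ := Nat.pos_of_dvd_of_pos hm1 hM0
  have hm₃n' : m₃ ∣ n' := hm1.trans (Nat.div_dvd_of_dvd hab'n)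
  -- maximality in divisibility form
  have dmax : ∀ d : ℕ, d ∣ n' → Nat.Coprime d (a' * b') → d ∣ m₃ := by
    intro d hdn hdc
    have hd0 : 0 < d := Nat.pos_of_dvd_of_pos hdn hn'0
    have hdM : d ∣ M := hdc.dvd_of_dvd_mul_left (hMeq ▸ hdn)
    have hl : Nat.lcm d m₃ ∣ M := Nat.lcm_dvd hdM hm1
    have hlc : Nat.Coprime (Nat.lcm d m₃) (a' * b') :=
      Nat.Coprime.coprime_dvd_left (Nat.lcm_dvd (dvd_mul_right d m₃) (dvd_mul_left m₃ d))
        (hdc.mul hm2)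
    have hle : Nat.lcm d m₃ ≤ m₃ := hm3 _ hl hlc
    have hge : m₃ ≤ Nat.lcm d m₃ := Nat.le_of_dvd (Nat.pos_of_dvd_of_pos hl hM0)
      (Nat.dvd_lcm_right d m₃)
    have : Nat.lcm d m₃ = m₃ := le_antisymm hle hge
    exact this ▸ Nat.dvd_lcm_left d m₃
  have hgcd_na : Nat.gcd n a = a := Nat.gcd_eq_right ha
  have hgcd_nb : Nat.gcd n b = b := Nat.gcd_eq_right hb
  constructor
  · -- set equality
    ext c
    simp only [Set.mem_setOf_eq, Set.mem_iUnion₂, Set.mem_iUnion]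
    constructor
    · rintro ⟨u, v, hu, hv, rfl⟩
      rw [atom_char n hn, hgcd_na] at hu
      rw [atom_char n hn, hgcd_nb] at hv
      set S := u.val with hS
      set T := v.val with hT
      have haS : a ∣ S := hu ▸ Nat.gcd_dvd_right n S
      have hbT : b ∣ T := hv ▸ Nat.gcd_dvd_right n T
      set s := S / a with hs
      set t := T / b with ht
      have hsS : a * s = S := Nat.mul_div_cancel' haS
      have htT : b * t = T := Nat.mul_div_cancel' hbT
      have hna : a * (n / a) = n := Nat.mul_div_cancel' ha
      have hnb : b * (n / b) = n := Nat.mul_div_cancel' hb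
      have hcops : Nat.Coprime (n / a) s := by
        have : a * Nat.gcd (n / a) s = a := by
          rw [← Nat.gcd_mul_left, hna, hsS, hu]
        exact Nat.eq_of_mul_eq_mul_left ha0 (by rw [this, mul_one])
      have hcopt : Nat.Coprime (n / b) t := by
        have : b * Nat.gcd (n / b) t = b := by
          rw [← Nat.gcd_mul_left, hnb, htT, hv]
        exact Nat.eq_of_mul_eq_mul_left hb0 (by rw [this, mul_one])
      -- the sum
      have hsum : u + v = ((S + T : ℕ) : ZMod n) := by
        push_cast
        rw [ZMod.natCast_val, ZMod.natCast_val, ZMod.cast_id, ZMod.cast_id]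
      set w := a' * s + b' * t with hw
      have hST : S + T = g * w := by
        rw [hw, ← hsS, ← htT, ← hga', ← hgb']; ring
      set d := Nat.gcd n' w with hd
      have hgcd_c : Nat.gcd n ((u + v).val) = g * d := by
        rw [hsum, val_natCast_gcd n hn, hST, ← hgn', Nat.gcd_mul_left]
      -- coprimality of d with a' and b'
      have hda' : Nat.Coprime d a' := by
        rw [Nat.coprime_comm]
        by_contra hcon
        obtain ⟨p, hp, hpd⟩ := Nat.exists_prime_and_dvd
          (fun h : Nat.gcd a' d = 1 => hcon h)
        have hpa : p ∣ a' := hpd.trans (Nat.gcd_dvd_left a' d)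
        have hpw : p ∣ w := (hpd.trans (Nat.gcd_dvd_right a' d)).trans (Nat.gcd_dvd_right n' w)
        have hpbt : p ∣ b' * t := by
          have h1 : p ∣ a' * s := hpa.mul_right s
          have := Nat.dvd_sub hpw h1
          rwa [hw, Nat.add_sub_cancel_left] at this
        have hpb : ¬ p ∣ b' := fun h =>
          Nat.Prime.one_lt hp |>.ne' (Nat.eq_one_of_dvd_one ((Nat.dvd_gcd hpa h).trans hco.dvd))
        have hpt : p ∣ t := (Nat.Prime.dvd_mul hp).1 hpbt |>.resolve_left hpb
        have hnb' : n / b = n' / b' * 1 := by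
          rw [mul_one]
          rw [← hgn', ← hgb']
          rw [Nat.mul_div_mul_left _ _ hg0]
        have hpnb : p ∣ n / b := by
          rw [hnb', mul_one]
          exact hpa.trans (by
            have : a' ∣ n' / b' := by
              have : b' * (a' * M) = n' := by rw [← hMeq]; ring
              rw [← this, Nat.mul_div_cancel_left _ hb'0]
              exact dvd_mul_right a' M
            exact this)
        exact Nat.Prime.one_lt hp |>.ne'
          (Nat.eq_one_of_dvd_one ((Nat.dvd_gcd hpnb hpt).trans hcopt.dvd))
      have hdb' : Nat.Coprime d b' := by
        rw [Nat.coprime_comm]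
        by_contra hcon
        obtain ⟨p, hp, hpd⟩ := Nat.exists_prime_and_dvd
          (fun h : Nat.gcd b' d = 1 => hcon h)
        have hpb : p ∣ b' := hpd.trans (Nat.gcd_dvd_left b' d)
        have hpw : p ∣ w := (hpd.trans (Nat.gcd_dvd_right b' d)).trans (Nat.gcd_dvd_right n' w)
        have hpas : p ∣ a' * s := by
          have h1 : p ∣ b' * t := hpb.mul_right t
          have := Nat.dvd_sub hpw h1
          rwa [hw, Nat.add_sub_cancel] at this
        have hpa : ¬ p ∣ a' := fun h =>
          Nat.Prime.one_lt hp |>.ne' (Nat.eq_one_of_dvd_one ((Nat.dvd_gcd h hpb).trans hco.dvd))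
        have hps : p ∣ s := (Nat.Prime.dvd_mul hp).1 hpas |>.resolve_left hpa
        have hpna : p ∣ n / a := by
          have hna' : n / a = n' / a' := by
            rw [← hgn', ← hga', Nat.mul_div_mul_left _ _ hg0]
          rw [hna']
          exact hpb.trans (by
            have : b' ∣ n' / a' := by
              have : a' * (b' * M) = n' := by rw [← hMeq]; ring
              rw [← this, Nat.mul_div_cancel_left _ ha'0]
              exact dvd_mul_right b' M
            exact this)
        exact Nat.Prime.one_lt hp |>.ne'
          (Nat.eq_one_of_dvd_one ((Nat.dvd_gcd hpna hps).trans hcops.dvd))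
      have hdm : d ∣ m₃ := dmax d (Nat.gcd_dvd_left n' w) (Nat.Coprime.mul_right hda' hdb')
      refine ⟨d, hdm, ?_⟩
      rw [atom_char n hn, hgcd_c]
      have : g * d ∣ n := by
        rw [← hgn']
        exact mul_dvd_mul_left g ((Nat.gcd_dvd_left n' w))
      rw [Nat.gcd_eq_right this]
    · rintro ⟨d, hdm, hc⟩
      rw [atom_char n hn] at hc
      have hdn' : d ∣ n' := (hdm.trans hm₃n')
      have hgdn : g * d ∣ n := by rw [← hgn']; exact mul_dvd_mul_left g hdn'
      rw [Nat.gcd_eq_right hgdn] at hc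
      -- extract y
      set C := c.val with hC
      have hgC : g ∣ C := (dvd_mul_right g d).trans (hc ▸ Nat.gcd_dvd_right n C)
      set y := C / g with hy
      have hgy : g * y = C := Nat.mul_div_cancel' hgC
      have hgcd_y : Nat.gcd n' y = d := by
        have : g * Nat.gcd n' y = g * d := by
          rw [← Nat.gcd_mul_left, hgn', hgy, hc]
        exact Nat.eq_of_mul_eq_mul_left hg0 this
      have hyc : Nat.Coprime y (a' * b') := by
        by_contra hcon
        obtain ⟨p, hp, hpd⟩ := Nat.exists_prime_and_dvd
          (fun h : Nat.gcd y (a' * b') = 1 => hcon h)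
        have hpy : p ∣ y := hpd.trans (Nat.gcd_dvd_left _ _)
        have hpab : p ∣ a' * b' := hpd.trans (Nat.gcd_dvd_right _ _)
        have hpd' : p ∣ d := by
          rw [← hgcd_y]
          exact Nat.dvd_gcd (hpab.trans hab'n) hpy
        have : p ∣ Nat.gcd m₃ (a' * b') := Nat.dvd_gcd (hpd'.trans hdm) hpab
        rw [hm2] at this
        exact hp.one_lt.ne' (Nat.eq_one_of_dvd_one this ▸ rfl)
      obtain ⟨s, t, hsu, htu, hst⟩ := coreL n' hn'0 a' b' y ha'n hb'n hco hcase hyc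
      haveI : NeZero n' := ⟨hn'0.ne'⟩
      set S := s.val with hS
      set T := t.val with hT
      have hScop : Nat.Coprime S n' := (isUnit_iff_coprime_val n' s).1 hsu
      have hTcop : Nat.Coprime T n' := (isUnit_iff_coprime_val n' t).1 htu
      refine ⟨((a * S : ℕ) : ZMod n), ((b * T : ℕ) : ZMod n), ?_, ?_, ?_⟩
      · rw [atom_char n hn, val_natCast_gcd n hn, hgcd_na]
        have h1 : Nat.gcd n (a * S) = a * Nat.gcd (n / a) S := by
          conv_lhs => rw [← Nat.mul_div_cancel' ha]
          rw [Nat.gcd_mul_left]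
        rw [h1]
        have hnan' : n / a ∣ n' := by
          rw [show n / a = n' / a' by rw [← hgn', ← hga', Nat.mul_div_mul_left _ _ hg0]]
          exact Nat.div_dvd_of_dvd ha'n
        have : Nat.gcd (n / a) S = 1 := Nat.Coprime.coprime_dvd_left hnan' hScop.symm
        rw [this, mul_one]
      · rw [atom_char n hn, val_natCast_gcd n hn, hgcd_nb]
        have h1 : Nat.gcd n (b * T) = b * Nat.gcd (n / b) T := by
          conv_lhs => rw [← Nat.mul_div_cancel' hb]
          rw [Nat.gcd_mul_left]
        rw [h1]
        have hnbn' : n / b ∣ n' := by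
          rw [show n / b = n' / b' by rw [← hgn', ← hgb', Nat.mul_div_mul_left _ _ hg0]]
          exact Nat.div_dvd_of_dvd hb'n
        have : Nat.gcd (n / b) T = 1 := Nat.Coprime.coprime_dvd_left hnbn' hTcop.symm
        rw [this, mul_one]
      · -- sum equals c
        have hmod : a' * S + b' * T ≡ y [MOD n'] := by
          rw [← ZMod.natCast_eq_natCast_iff]
          push_cast
          rw [ZMod.natCast_val, ZMod.natCast_val, ZMod.cast_id, ZMod.cast_id]
          exact hst
        have hmod2 : g * (a' * S + b' * T) ≡ g * y [MOD g * n'] := Nat.ModEq.mul_left' (c := g) hmod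
        rw [hgn', hgy] at hmod2
        have : ((a * S + b * T : ℕ) : ZMod n) = ((C : ℕ) : ZMod n) := by
          rw [ZMod.natCast_eq_natCast_iff]
          calc a * S + b * T = g * (a' * S + b' * T) := by rw [← hga', ← hgb']; ring
          _ ≡ C [MOD n] := hmod2
        push_cast at this ⊢
        rw [this, hC, ZMod.natCast_val, ZMod.cast_id]
  · -- disjointness
    intro d₁ d₂ h1 h2 hne
    rw [Set.disjoint_left]
    intro z hz1 hz2
    rw [Set.mem_setOf_eq, atom_char n hn] at hz1 hz2
    have hgd1 : g * d₁ ∣ n := by rw [← hgn']; exact mul_dvd_mul_left g (h1.trans hm₃n')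
    have hgd2 : g * d₂ ∣ n := by rw [← hgn']; exact mul_dvd_mul_left g (h2.trans hm₃n')
    rw [Nat.gcd_eq_right hgd1] at hz1
    rw [Nat.gcd_eq_right hgd2] at hz2
    exact hne (Nat.eq_of_mul_eq_mul_left hg0 (hz1 ▸ hz2 ▸ rfl))
end

section
/- Let n be a positive integer with divisors a and b, g = gcd(a,b), n' = n/g, a' = a/g, b' = b/g, and suppose n' is even and a'b' is odd. Let m̃₃ be the largest divisor of n'/(a'b') coprime to a'b'. Then atom(a) + atom(b) = ⋃_{d ∣ m̃₃, d even} atom(g·d), a disjoint union over the even divisors d of m̃₃. -/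
open AddSubgroup

section aux
variable {n : ℕ} [NeZero n]

lemma mul_mem_zmult (x y : ZMod n) : x * y ∈ zmultiples y := by
  rw [AddSubgroup.mem_zmultiples_iff]
  refine ⟨(x.val : ℤ), ?_⟩
  rw [zsmul_eq_mul]
  push_cast
  rw [ZMod.natCast_zmod_val]

lemma zmult_unit_mul (U : (ZMod n)ˣ) (x : ZMod n) :
    zmultiples ((U : ZMod n) * x) = zmultiples x := by
  refine le_antisymm (zmultiples_le_of_mem (mul_mem_zmult _ _)) (zmultiples_le_of_mem ?_)
  have h : x = (↑U⁻¹ : ZMod n) * ((U : ZMod n) * x) := by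
    rw [← mul_assoc]; simp
  have h2 := mul_mem_zmult (↑U⁻¹ : ZMod n) ((U : ZMod n) * x)
  rwa [← h] at h2

lemma zmult_eq_gcd (z : ZMod n) :
    zmultiples z = zmultiples ((Nat.gcd z.val n : ℕ) : ZMod n) := by
  refine le_antisymm (zmultiples_le_of_mem ?_) (zmultiples_le_of_mem ?_) <;>
    rw [AddSubgroup.mem_zmultiples_iff]
  · refine ⟨((z.val / Nat.gcd z.val n : ℕ) : ℤ), ?_⟩
    rw [zsmul_eq_mul, Int.cast_natCast, ← Nat.cast_mul,
      Nat.div_mul_cancel (Nat.gcd_dvd_left _ _), ZMod.natCast_zmod_val]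
  · refine ⟨Nat.gcdA z.val n, ?_⟩
    rw [zsmul_eq_mul]
    have h : ((Nat.gcd z.val n : ℤ) : ZMod n) = ((Nat.gcd z.val n : ℕ) : ZMod n) := by
      push_cast; ring
    rw [← h, Nat.gcd_eq_gcd_ab]
    push_cast
    rw [ZMod.natCast_self, ZMod.natCast_zmod_val]
    ring

omit [NeZero n] in
lemma dvd_of_zmult_le {e f : ℕ} (he : e ∣ n) (h : ((f : ZMod n)) ∈ zmultiples (e : ZMod n)) :
    e ∣ f := by
  rw [AddSubgroup.mem_zmultiples_iff] at h
  obtain ⟨k, hk⟩ := h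
  rw [zsmul_eq_mul] at hk
  have h0 : ((k * e - f : ℤ) : ZMod n) = 0 := by push_cast; rw [hk]; ring
  rw [ZMod.intCast_zmod_eq_zero_iff_dvd] at h0
  have he' : (e : ℤ) ∣ (n : ℤ) := Int.natCast_dvd_natCast.mpr he
  have h3 : (e : ℤ) ∣ (f : ℤ) := by
    have h1 : (e : ℤ) ∣ k * e - f := he'.trans h0
    have h2 : (e : ℤ) ∣ k * e := dvd_mul_left (e:ℤ) k
    have := dvd_sub h2 h1
    simpa using this
  exact_mod_cast h3

omit [NeZero n] in
lemma zmult_inj {e f : ℕ} (he : e ∣ n) (hf : f ∣ n)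
    (h : zmultiples (e : ZMod n) = zmultiples (f : ZMod n)) : e = f := by
  refine Nat.dvd_antisymm ?_ ?_
  · exact dvd_of_zmult_le he (h ▸ AddSubgroup.mem_zmultiples _)
  · exact dvd_of_zmult_le hf (h ▸ AddSubgroup.mem_zmultiples _)

lemma cast_mul_eq_zero {e : ℕ} (he : e ∣ n) (y : ZMod n)
    (hy : ZMod.castHom (Nat.div_dvd_of_dvd he) (ZMod (n / e)) y = 0) :
    (e : ZMod n) * y = 0 := by
  have h1 : ((y.val : ℕ) : ZMod (n / e)) = 0 := by
    rw [← map_natCast (ZMod.castHom (Nat.div_dvd_of_dvd he) (ZMod (n / e))) y.val,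
      ZMod.natCast_zmod_val, hy]
  rw [ZMod.natCast_eq_zero_iff] at h1
  obtain ⟨q, hq⟩ := h1
  calc (e : ZMod n) * y = ((e * y.val : ℕ) : ZMod n) := by
        rw [Nat.cast_mul, ZMod.natCast_zmod_val]
    _ = ((n * q : ℕ) : ZMod n) := by rw [hq, ← Nat.mul_assoc, Nat.mul_div_cancel' he]
    _ = 0 := by rw [Nat.cast_mul, ZMod.natCast_self, zero_mul]

lemma lift_unit {e : ℕ} (he : e ∣ n) (w : ℤ) (hw : IsCoprime w ((n / e : ℕ) : ℤ)) :
    ∃ W : (ZMod n)ˣ, (e : ZMod n) * W = (e : ZMod n) * ((w : ℤ) : ZMod n) := by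
  set m := n / e with hm
  have hmn : m ∣ n := Nat.div_dvd_of_dvd he
  have hu : IsUnit ((w : ℤ) : ZMod m) := by
    obtain ⟨x, y, hxy⟩ := hw
    refine IsUnit.of_mul_eq_one ((x : ZMod m)) ?_
    have h1 : ((x * w + y * m : ℤ) : ZMod m) = ((1 : ℤ) : ZMod m) := by rw [hxy]
    push_cast at h1
    rw [ZMod.natCast_self] at h1
    rw [mul_comm]
    simpa using h1
  obtain ⟨W, hW⟩ := ZMod.unitsMap_surjective hmn hu.unit
  have hW' : ZMod.castHom hmn (ZMod m) (W : ZMod n) = ((w : ℤ) : ZMod m) := by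
    have := congrArg (Units.val) hW
    rw [ZMod.unitsMap_def, Units.coe_map, IsUnit.unit_spec] at this
    exact this
  refine ⟨W, ?_⟩
  have h0 : ZMod.castHom hmn (ZMod m) ((W : ZMod n) - ((w : ℤ) : ZMod n)) = 0 := by
    rw [map_sub, hW', map_intCast, sub_self]
  have h2 := cast_mul_eq_zero he _ h0
  rw [mul_sub, sub_eq_zero] at h2
  exact h2

end aux

lemma av (p₀ p₁ q₀ q₁ : ℤ) (M : ℕ) (hM : 0 < M)
    (h : ∀ p : ℕ, p.Prime → p ∣ M →
      ∃ k : ℤ, ¬((p : ℤ) ∣ (p₀ + p₁ * k)) ∧ ¬((p : ℤ) ∣ (q₀ + q₁ * k))) :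
    ∃ k : ℤ, IsCoprime (p₀ + p₁ * k) (M : ℤ) ∧ IsCoprime (q₀ + q₁ * k) (M : ℤ) := by
  induction M using Nat.strong_induction_on with
  | _ M IH =>
  rcases eq_or_lt_of_le (Nat.one_le_iff_ne_zero.mpr hM.ne') with h1 | h1
  · refine ⟨0, ?_, ?_⟩ <;> · rw [← h1]; exact isCoprime_one_right
  · set p := M.minFac with hp
    have hpp : p.Prime := Nat.minFac_prime (by omega)
    have hpM : p ∣ M := Nat.minFac_dvd M
    set v := M.factorization p with hv
    set M' := M / p ^ v with hM'
    have hMeq : p ^ v * M' = M := Nat.ordProj_mul_ordCompl_eq_self M p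
    have hpM' : ¬ p ∣ M' := Nat.not_dvd_ordCompl hpp hM.ne'
    have hv0 : 0 < v := hpp.factorization_pos_of_dvd hM.ne' hpM
    have hM'lt : M' < M := Nat.div_lt_self hM (Nat.one_lt_pow hv0.ne' hpp.one_lt)
    have hM'pos : 0 < M' := Nat.ordCompl_pos p hM.ne'
    have hM'dvd : M' ∣ M := Nat.ordCompl_dvd M p
    obtain ⟨k', hk'P, hk'Q⟩ := IH M' hM'lt hM'pos
      (fun q hq hqM' => h q hq (hqM'.trans hM'dvd))
    obtain ⟨kp, hkpP, hkpQ⟩ := h p hpp hpM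
    have hcop : Nat.Coprime M' p := ((Nat.Prime.coprime_iff_not_dvd hpp).mpr hpM').symm
    obtain ⟨x, y, hxy⟩ := hcop.isCoprime
    set K : ℤ := k' + M' * (x * (kp - k')) with hK
    have hprime : Prime ((p : ℕ) : ℤ) := Nat.prime_iff_prime_int.mp hpp
    have hKkp : ((p : ℕ) : ℤ) ∣ K - kp := by
      refine ⟨(kp - k') * (-y), ?_⟩
      rw [hK]
      linear_combination (kp - k') * hxy
    have hsplit : ((M : ℕ) : ℤ) = ((p : ℤ)) ^ v * (M' : ℤ) := by
      rw [← hMeq]; push_cast; ring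
    have main : ∀ r₀ r₁ : ℤ, ¬((p:ℤ) ∣ (r₀ + r₁ * kp)) → IsCoprime (r₀ + r₁ * k') (M' : ℤ) →
        IsCoprime (r₀ + r₁ * K) (M : ℤ) := by
      intro r₀ r₁ hr hr'
      rw [hsplit]
      refine IsCoprime.mul_right (IsCoprime.pow_right ?_) ?_
      · refine (hprime.coprime_iff_not_dvd.mpr ?_).symm
        intro hdvd
        apply hr
        have h2 : ((p:ℕ):ℤ) ∣ (r₀ + r₁ * K) - (r₀ + r₁ * kp) := by
          have h5 : (r₀ + r₁ * K) - (r₀ + r₁ * kp) = r₁ * (K - kp) := by ring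
          rw [h5]
          exact hKkp.mul_left r₁
        have h3 := dvd_sub hdvd h2
        have h4 : (r₀ + r₁ * K) - ((r₀ + r₁ * K) - (r₀ + r₁ * kp)) = r₀ + r₁ * kp := by ring
        rwa [h4] at h3
      · have heq : r₀ + r₁ * K = (r₀ + r₁ * k') + (M' : ℤ) * (r₁ * (x * (kp - k'))) := by
          rw [hK]; ring
        rw [heq]
        exact hr'.add_mul_left_left _
    exact ⟨K, main p₀ p₁ hkpP hk'P, main q₀ q₁ hkpQ hk'Q⟩

theorem stmt_19 (n a b : ℕ) (hn : 0 < n) (ha : a ∣ n) (hb : b ∣ n)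
    (g : ℕ) (hg : g = Nat.gcd a b)
    (hcase : Even (n / g) ∧ Odd ((a / g) * (b / g)))
    (m₃ : ℕ)
    (hm₃ : m₃ ∣ (n / g) / ((a / g) * (b / g)) ∧ Nat.Coprime m₃ ((a / g) * (b / g)) ∧
      ∀ d : ℕ, d ∣ (n / g) / ((a / g) * (b / g)) → Nat.Coprime d ((a / g) * (b / g)) →
        d ≤ m₃) :
    {c : ZMod n | ∃ u v : ZMod n,
        AddSubgroup.zmultiples u = AddSubgroup.zmultiples (a : ZMod n) ∧
        AddSubgroup.zmultiples v = AddSubgroup.zmultiples (b : ZMod n) ∧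
        u + v = c} =
      ⋃ d ∈ {d : ℕ | d ∣ m₃ ∧ Even d},
        {z : ZMod n | AddSubgroup.zmultiples z =
          AddSubgroup.zmultiples ((g * d : ℕ) : ZMod n)} ∧
    ∀ d₁ d₂ : ℕ, d₁ ∣ m₃ → Even d₁ → d₂ ∣ m₃ → Even d₂ → d₁ ≠ d₂ →
      Disjoint
        {z : ZMod n | AddSubgroup.zmultiples z =
          AddSubgroup.zmultiples ((g * d₁ : ℕ) : ZMod n)}
        {z : ZMod n | AddSubgroup.zmultiples z =
          AddSubgroup.zmultiples ((g * d₂ : ℕ) : ZMod n)} := by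
  haveI : NeZero n := ⟨hn.ne'⟩
  obtain ⟨hn'even, hodd⟩ := hcase
  obtain ⟨hm₃dvd, hm₃cop, hm₃max⟩ := hm₃
  have hapos : 0 < a := Nat.pos_of_dvd_of_pos ha hn
  have hbpos : 0 < b := Nat.pos_of_dvd_of_pos hb hn
  have hga : g ∣ a := hg ▸ Nat.gcd_dvd_left a b
  have hgb : g ∣ b := hg ▸ Nat.gcd_dvd_right a b
  have hg0 : 0 < g := hg ▸ Nat.gcd_pos_of_pos_left b hapos
  have hgn : g ∣ n := hga.trans ha
  have hn'pos : 0 < n / g := Nat.div_pos (Nat.le_of_dvd hn hgn) hg0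
  have hcop' : Nat.Coprime (a / g) (b / g) := by
    subst hg; exact Nat.coprime_div_gcd_div_gcd (Nat.gcd_pos_of_pos_left b hapos)
  have haodd : Odd (a / g) := (Nat.odd_mul.mp hodd).1
  have hbodd : Odd (b / g) := (Nat.odd_mul.mp hodd).2
  have hdiv : ∀ x : ℕ, x ∣ n → g ∣ x → (x / g) ∣ (n / g) := by
    intro x hx hgx
    obtain ⟨k, hk⟩ := hx
    refine ⟨k, ?_⟩
    have h1 : n = g * ((x / g) * k) := by
      calc n = x * k := hk
        _ = (g * (x / g)) * k := by rw [Nat.mul_div_cancel' hgx]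
        _ = g * ((x / g) * k) := by ring
    rw [h1, Nat.mul_div_cancel_left _ hg0]
  have ha' : (a / g) ∣ (n / g) := hdiv a ha hga
  have hb' : (b / g) ∣ (n / g) := hdiv b hb hgb
  have hab' : (a / g) * (b / g) ∣ (n / g) := hcop'.mul_dvd_of_dvd_of_dvd ha' hb'
  have hm₃pos : 0 < m₃ := hm₃max 1 (one_dvd _) (Nat.coprime_one_left _)
  have hm₃n' : m₃ ∣ n / g := hm₃dvd.trans (Nat.div_dvd_of_dvd hab')
  have hdmax : ∀ d : ℕ, d ∣ n / g → Nat.Coprime d ((a / g) * (b / g)) → d ∣ m₃ := by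
    intro d hdn hdcop
    have hdd : d ∣ (n / g) / ((a / g) * (b / g)) := by
      rw [Nat.dvd_div_iff_mul_dvd hab']
      exact (hdcop.symm).mul_dvd_of_dvd_of_dvd hab' hdn
    have hl0 : Nat.lcm d m₃ ∣ d * m₃ := Nat.lcm_dvd (Dvd.intro m₃ rfl) (Dvd.intro_left d rfl)
    have hl1 : Nat.lcm d m₃ ∣ (n / g) / ((a / g) * (b / g)) := Nat.lcm_dvd hdd hm₃dvd
    have hl2 : Nat.Coprime (Nat.lcm d m₃) ((a / g) * (b / g)) :=
      Nat.Coprime.coprime_dvd_left hl0 (Nat.Coprime.mul hdcop hm₃cop)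
    have hle := hm₃max _ hl1 hl2
    have hdvd2 : m₃ ∣ Nat.lcm d m₃ := Nat.dvd_lcm_right _ _
    have hdpos : 0 < d := Nat.pos_of_dvd_of_pos hdn hn'pos
    have hlcmpos : 0 < Nat.lcm d m₃ := Nat.lcm_pos hdpos hm₃pos
    have heq : Nat.lcm d m₃ = m₃ := le_antisymm hle (Nat.le_of_dvd hlcmpos hdvd2)
    exact heq ▸ Nat.dvd_lcm_left d m₃
  have hgd_dvd_n : ∀ d : ℕ, d ∣ m₃ → g * d ∣ n := by
    intro d hd
    have h1 : d ∣ n / g := hd.trans hm₃n'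
    have h2 := mul_dvd_mul_left g h1
    rwa [Nat.mul_div_cancel' hgn] at h2
  have hatom : ∀ e : ℕ, e ∣ n → ∀ z : ZMod n,
      (zmultiples z = zmultiples ((e : ℕ) : ZMod n)) ↔ Nat.gcd z.val n = e := by
    intro e he z
    constructor
    · intro hz
      exact zmult_inj (Nat.gcd_dvd_right _ _) he ((zmult_eq_gcd z).symm.trans hz)
    · intro hz
      rw [← hz]
      exact zmult_eq_gcd z
  constructor
  · -- set equality
    ext c
    simp only [Set.mem_setOf_eq, Set.mem_iUnion]
    constructor
    · rintro ⟨u, v, hu, hv, rfl⟩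
      have hau : Nat.gcd u.val n = a := (hatom a ha u).mp hu
      have hbv : Nat.gcd v.val n = b := (hatom b hb v).mp hv
      set sv := u.val / a with hsvdef
      set tv := v.val / b with htvdef
      have hsv : a * sv = u.val := Nat.mul_div_cancel' (hau ▸ Nat.gcd_dvd_left u.val n)
      have htv : b * tv = v.val := Nat.mul_div_cancel' (hbv ▸ Nat.gcd_dvd_left v.val n)
      have hsvcop : Nat.Coprime sv (n / a) := by
        have h1 := Nat.coprime_div_gcd_div_gcd (hau ▸ hapos :
          0 < Nat.gcd u.val n)
        rwa [hau] at h1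
      have htvcop : Nat.Coprime tv (n / b) := by
        have h1 := Nat.coprime_div_gcd_div_gcd (hbv ▸ hbpos :
          0 < Nat.gcd v.val n)
        rwa [hbv] at h1
      set X := a * sv + b * tv with hX
      have hcX : u + v = ((X : ℕ) : ZMod n) := by
        have h1 : ((a * sv : ℕ) : ZMod n) = u := by rw [hsv, ZMod.natCast_zmod_val]
        have h2 : ((b * tv : ℕ) : ZMod n) = v := by rw [htv, ZMod.natCast_zmod_val]
        rw [hX, Nat.cast_add, h1, h2]
      set Y := (a / g) * sv + (b / g) * tv with hY
      have hXY : X = g * Y := by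
        rw [hX, hY, Nat.mul_add, ← Nat.mul_assoc, ← Nat.mul_assoc,
          Nat.mul_div_cancel' hga, Nat.mul_div_cancel' hgb]
      have hgcd : Nat.gcd X n = g * Nat.gcd Y (n / g) := by
        conv_lhs => rw [hXY, show n = g * (n / g) from (Nat.mul_div_cancel' hgn).symm]
        exact Nat.gcd_mul_left g Y (n / g)
      set d := Nat.gcd Y (n / g) with hd
      have hdpos : 0 < d := Nat.gcd_pos_of_pos_right Y hn'pos
      -- parity
      have hna2 : n / a = (n / g) / (a / g) := by
        rw [Nat.div_div_eq_div_mul, Nat.mul_div_cancel' hga]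
      have hnb2 : n / b = (n / g) / (b / g) := by
        rw [Nat.div_div_eq_div_mul, Nat.mul_div_cancel' hgb]
      have hevenna : Even (n / a) := by
        rw [hna2]
        have h1 : (a / g) * ((n / g) / (a / g)) = n / g := Nat.mul_div_cancel' ha'
        rcases Nat.even_mul.mp (h1 ▸ hn'even) with h | h
        · exact absurd h (Nat.not_even_iff_odd.mpr haodd)
        · exact h
      have hevennb : Even (n / b) := by
        rw [hnb2]
        have h1 : (b / g) * ((n / g) / (b / g)) = n / g := Nat.mul_div_cancel' hb'
        rcases Nat.even_mul.mp (h1 ▸ hn'even) with h | h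
        · exact absurd h (Nat.not_even_iff_odd.mpr hbodd)
        · exact h
      have hsvodd : Odd sv := by
        rcases Nat.even_or_odd sv with h | h
        · exfalso
          have h2 := Nat.dvd_gcd h.two_dvd hevenna.two_dvd
          rw [Nat.Coprime] at hsvcop
          rw [hsvcop] at h2
          omega
        · exact h
      have htvodd : Odd tv := by
        rcases Nat.even_or_odd tv with h | h
        · exfalso
          have h2 := Nat.dvd_gcd h.two_dvd hevennb.two_dvd
          rw [Nat.Coprime] at htvcop
          rw [htvcop] at h2
          omega
        · exact h
      have hYeven : 2 ∣ Y := (Odd.add_odd (haodd.mul hsvodd) (hbodd.mul htvodd)).two_dvd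
      have hdeven : 2 ∣ d := Nat.dvd_gcd hYeven hn'even.two_dvd
      -- coprimality
      have hda' : Nat.Coprime d (a / g) := by
        have he1 : Nat.gcd d (a / g) ∣ Y := (Nat.gcd_dvd_left d (a / g)).trans (Nat.gcd_dvd_left Y (n / g))
        have he2 : Nat.gcd d (a / g) ∣ (a / g) * sv :=
          Dvd.dvd.mul_right (Nat.gcd_dvd_right d (a / g)) sv
        have he3 : Nat.gcd d (a / g) ∣ (b / g) * tv := by
          have := Nat.dvd_sub he1 he2
          rwa [hY, Nat.add_sub_cancel_left] at this
        have he4 : Nat.Coprime (Nat.gcd d (a / g)) (b / g) :=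
          Nat.Coprime.coprime_dvd_left (Nat.gcd_dvd_right d (a / g)) hcop'
        have he5 : Nat.gcd d (a / g) ∣ tv := he4.dvd_of_dvd_mul_left he3
        have he6 : Nat.gcd d (a / g) ∣ n / b := by
          refine (Nat.gcd_dvd_right d (a / g)).trans ?_
          rw [hnb2, Nat.dvd_div_iff_mul_dvd hb']
          rwa [Nat.mul_comm (b/g) (a/g)]
        have he7 := Nat.dvd_gcd he5 he6
        rw [Nat.Coprime] at htvcop
        rw [htvcop] at he7
        exact Nat.dvd_one.mp he7
      have hdb' : Nat.Coprime d (b / g) := by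
        have he1 : Nat.gcd d (b / g) ∣ Y := (Nat.gcd_dvd_left d (b / g)).trans (Nat.gcd_dvd_left Y (n / g))
        have he2 : Nat.gcd d (b / g) ∣ (b / g) * tv :=
          Dvd.dvd.mul_right (Nat.gcd_dvd_right d (b / g)) tv
        have he3 : Nat.gcd d (b / g) ∣ (a / g) * sv := by
          have := Nat.dvd_sub he1 he2
          rwa [hY, Nat.add_sub_cancel] at this
        have he4 : Nat.Coprime (Nat.gcd d (b / g)) (a / g) :=
          Nat.Coprime.coprime_dvd_left (Nat.gcd_dvd_right d (b / g)) hcop'.symm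
        have he5 : Nat.gcd d (b / g) ∣ sv := he4.dvd_of_dvd_mul_left he3
        have he6 : Nat.gcd d (b / g) ∣ n / a := by
          refine (Nat.gcd_dvd_right d (b / g)).trans ?_
          rw [hna2, Nat.dvd_div_iff_mul_dvd ha']
          exact hab'
        have he7 := Nat.dvd_gcd he5 he6
        rw [Nat.Coprime] at hsvcop
        rw [hsvcop] at he7
        exact Nat.dvd_one.mp he7
      have hdcop : Nat.Coprime d ((a / g) * (b / g)) := Nat.Coprime.mul_right hda' hdb'
      have hdm₃ : d ∣ m₃ := hdmax d (Nat.gcd_dvd_right _ _) hdcop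
      have hdeven' : Even d := by obtain ⟨r, hr⟩ := hdeven; exact ⟨r, by omega⟩
      refine ⟨d, ⟨hdm₃, hdeven'⟩, ?_⟩
      rw [hcX]
      have h1 := zmult_eq_gcd ((X : ℕ) : ZMod n)
      have h2 : Nat.gcd ((X : ℕ) : ZMod n).val n = g * d := by
        rw [ZMod.val_natCast]
        have h3 : Nat.gcd (X % n) n = Nat.gcd X n := by
          rw [Nat.gcd_comm X n, Nat.gcd_rec n X]
        rw [h3, hgcd]
      rw [h2] at h1
      exact h1
    · rintro ⟨d, ⟨hd1, hd2⟩, hzc⟩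
      have hgdn : g * d ∣ n := hgd_dvd_n d hd1
      have hgcdc : Nat.gcd c.val n = g * d := (hatom _ hgdn c).mp hzc
      have hdpos : 0 < d := Nat.pos_of_dvd_of_pos hd1 hm₃pos
      have hgdpos : 0 < g * d := Nat.mul_pos hg0 hdpos
      set w := c.val / (g * d) with hwdef
      have hwmul : (g * d) * w = c.val := Nat.mul_div_cancel' (hgcdc ▸ Nat.gcd_dvd_left c.val n)
      have hwcop : Nat.Coprime w (n / (g * d)) := by
        have h1 := Nat.coprime_div_gcd_div_gcd (hgcdc ▸ hgdpos : 0 < Nat.gcd c.val n)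
        rwa [hgcdc] at h1
      have hdcop : Nat.Coprime d ((a / g) * (b / g)) := Nat.Coprime.coprime_dvd_left hd1 hm₃cop
      obtain ⟨s₀', t₀', hst⟩ := hcop'.isCoprime
      set s₀ : ℤ := (d : ℤ) * s₀' with hs₀
      set t₀ : ℤ := (d : ℤ) * t₀' with ht₀
      have hsum₀ : ((a / g : ℕ) : ℤ) * s₀ + ((b / g : ℕ) : ℤ) * t₀ = (d : ℤ) := by
        rw [hs₀, ht₀]; linear_combination (d : ℤ) * hst
      have hprimes : ∀ p : ℕ, p.Prime → p ∣ n / g →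
          ∃ k : ℤ, ¬((p : ℤ) ∣ (s₀ + ((b / g : ℕ) : ℤ) * k)) ∧
            ¬((p : ℤ) ∣ (t₀ + (-((a / g : ℕ) : ℤ)) * k)) := by
        intro p hp hpn
        have hpz : Prime ((p : ℕ) : ℤ) := Nat.prime_iff_prime_int.mp hp
        by_cases hpa : p ∣ a / g
        · have hpb : ¬ p ∣ b / g := by
            intro hpb
            have h1 := Nat.dvd_gcd hpa hpb
            rw [Nat.Coprime] at hcop'
            rw [hcop'] at h1
            exact hp.one_lt.ne' (Nat.dvd_one.mp h1)
          have hpd : ¬ p ∣ d := by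
            intro hpd
            have h1 : p ∣ (a / g) * (b / g) := Dvd.dvd.mul_right hpa _
            have h2 := Nat.dvd_gcd hpd h1
            rw [Nat.Coprime] at hdcop
            rw [hdcop] at h2
            exact hp.one_lt.ne' (Nat.dvd_one.mp h2)
          have hpt₀ : ¬ (p : ℤ) ∣ t₀ := by
            intro hdvd
            have h2 : (p : ℤ) ∣ ((a / g : ℕ) : ℤ) := Int.natCast_dvd_natCast.mpr hpa
            have h1 : (p : ℤ) ∣ (d : ℤ) := by
              rw [← hsum₀]
              exact dvd_add (h2.mul_right s₀) (hdvd.mul_left _)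
            exact hpd (Int.natCast_dvd_natCast.mp h1)
          by_cases hps : (p : ℤ) ∣ s₀
          · refine ⟨1, ?_, ?_⟩
            · intro hdvd
              have h1 := dvd_sub hdvd hps
              rw [show s₀ + ((b / g : ℕ) : ℤ) * 1 - s₀ = ((b / g : ℕ) : ℤ) from by ring] at h1
              exact hpb (Int.natCast_dvd_natCast.mp h1)
            · intro hdvd
              apply hpt₀
              have h2 : (p : ℤ) ∣ ((a / g : ℕ) : ℤ) := Int.natCast_dvd_natCast.mpr hpa
              have h3 := dvd_add hdvd h2
              rwa [show t₀ + (-((a / g : ℕ) : ℤ)) * 1 + ((a / g : ℕ) : ℤ) = t₀ from by ring] at h3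
          · refine ⟨0, ?_, ?_⟩
            · rw [mul_zero, add_zero]; exact hps
            · rw [mul_zero, add_zero]; exact hpt₀
        · by_cases hpb : p ∣ b / g
          · have hpd : ¬ p ∣ d := by
              intro hpd
              have h1 : p ∣ (a / g) * (b / g) := Dvd.dvd.mul_left hpb _
              have h2 := Nat.dvd_gcd hpd h1
              rw [Nat.Coprime] at hdcop
              rw [hdcop] at h2
              exact hp.one_lt.ne' (Nat.dvd_one.mp h2)
            have hps₀ : ¬ (p : ℤ) ∣ s₀ := by
              intro hdvd
              have h2 : (p : ℤ) ∣ ((b / g : ℕ) : ℤ) := Int.natCast_dvd_natCast.mpr hpb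
              have h1 : (p : ℤ) ∣ (d : ℤ) := by
                rw [← hsum₀]
                exact dvd_add (hdvd.mul_left _) (h2.mul_right t₀)
              exact hpd (Int.natCast_dvd_natCast.mp h1)
            by_cases hpt : (p : ℤ) ∣ t₀
            · refine ⟨1, ?_, ?_⟩
              · intro hdvd
                apply hps₀
                have h2 : (p : ℤ) ∣ ((b / g : ℕ) : ℤ) := Int.natCast_dvd_natCast.mpr hpb
                have h3 := dvd_sub hdvd h2
                rwa [show s₀ + ((b / g : ℕ) : ℤ) * 1 - ((b / g : ℕ) : ℤ) = s₀ from by ring] at h3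
              · intro hdvd
                have h1 := dvd_sub hpt hdvd
                rw [show t₀ - (t₀ + (-((a / g : ℕ) : ℤ)) * 1) = ((a / g : ℕ) : ℤ) from by ring] at h1
                exact hpa (Int.natCast_dvd_natCast.mp h1)
            · refine ⟨0, ?_, ?_⟩
              · rw [mul_zero, add_zero]; exact hps₀
              · rw [mul_zero, add_zero]; exact hpt
          · -- p divides neither a/g nor b/g
            have hpa' : ¬ (p : ℤ) ∣ ((a / g : ℕ) : ℤ) := fun h => hpa (Int.natCast_dvd_natCast.mp h)
            have hpb' : ¬ (p : ℤ) ∣ ((b / g : ℕ) : ℤ) := fun h => hpb (Int.natCast_dvd_natCast.mp h)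
            by_cases hp2 : p = 2
            · subst hp2
              obtain ⟨r, hr⟩ := id hbodd
              have h1b : (2 : ℤ) ∣ 1 + ((b / g : ℕ) : ℤ) := ⟨r + 1, by rw [hr]; push_cast; ring⟩
              have hdint : (2 : ℤ) ∣ (d : ℤ) := by
                obtain ⟨m', hm'⟩ := hd2
                exact ⟨(m' : ℤ), by rw [hm']; push_cast; ring⟩
              refine ⟨s₀ + 1, ?_, ?_⟩
              · intro hdvd
                have h2 := dvd_sub hdvd (h1b.mul_left s₀)
                rw [show s₀ + ((b / g : ℕ) : ℤ) * (s₀ + 1) - s₀ * (1 + ((b / g : ℕ) : ℤ)) =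
                  ((b / g : ℕ) : ℤ) from by ring] at h2
                have h3 : (2 : ℕ) ∣ b / g := by exact_mod_cast h2
                have h4 := Nat.odd_iff.mp hbodd
                omega
              · intro hdvd
                have h2 : (2 : ℤ) ∣ (t₀ : ℤ) * (1 + ((b / g : ℕ) : ℤ)) := h1b.mul_left t₀
                have h5 := dvd_sub (dvd_sub h2 hdint) hdvd
                rw [show t₀ * (1 + ((b / g : ℕ) : ℤ)) - (d : ℤ) -
                  (t₀ + (-((a / g : ℕ) : ℤ)) * (s₀ + 1)) = ((a / g : ℕ) : ℤ) from by
                    linear_combination hsum₀] at h5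
                have h3 : (2 : ℕ) ∣ a / g := by exact_mod_cast h5
                have h4 := Nat.odd_iff.mp haodd
                omega
            · -- p odd
              have hp1 : ¬ (p : ℤ) ∣ 1 := hpz.not_dvd_one
              have hp2' : ¬ (p : ℤ) ∣ 2 := by
                intro h
                have h1 : p ∣ 2 := by exact_mod_cast h
                exact hp2 ((Nat.prime_dvd_prime_iff_eq hp Nat.prime_two).mp h1)
              have keyP : ∀ i j : ℤ, (p : ℤ) ∣ s₀ + ((b / g : ℕ) : ℤ) * i →
                  (p : ℤ) ∣ s₀ + ((b / g : ℕ) : ℤ) * j → (p : ℤ) ∣ i - j := by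
                intro i j hi hj
                have h1 := dvd_sub hi hj
                rw [show s₀ + ((b / g : ℕ) : ℤ) * i - (s₀ + ((b / g : ℕ) : ℤ) * j) =
                  ((b / g : ℕ) : ℤ) * (i - j) from by ring] at h1
                exact (hpz.dvd_mul.mp h1).resolve_left hpb'
              have keyQ : ∀ i j : ℤ, (p : ℤ) ∣ t₀ + (-((a / g : ℕ) : ℤ)) * i →
                  (p : ℤ) ∣ t₀ + (-((a / g : ℕ) : ℤ)) * j → (p : ℤ) ∣ i - j := by
                intro i j hi hj
                have h1 := dvd_sub hj hi
                rw [show t₀ + (-((a / g : ℕ) : ℤ)) * j - (t₀ + (-((a / g : ℕ) : ℤ)) * i) =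
                  ((a / g : ℕ) : ℤ) * (i - j) from by ring] at h1
                exact (hpz.dvd_mul.mp h1).resolve_left hpa'
              by_cases h0 : (p : ℤ) ∣ s₀ + ((b / g : ℕ) : ℤ) * 0
              · by_cases h1q : (p : ℤ) ∣ t₀ + (-((a / g : ℕ) : ℤ)) * 1
                · refine ⟨2, ?_, ?_⟩
                  · intro hd'
                    have := keyP 2 0 hd' h0
                    rw [show (2 : ℤ) - 0 = 2 from by ring] at this
                    exact hp2' this
                  · intro hd'
                    have := keyQ 2 1 hd' h1q
                    rw [show (2 : ℤ) - 1 = 1 from by ring] at this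
                    exact hp1 this
                · refine ⟨1, ?_, h1q⟩
                  intro hd'
                  have := keyP 1 0 hd' h0
                  rw [show (1 : ℤ) - 0 = 1 from by ring] at this
                  exact hp1 this
              · by_cases h0q : (p : ℤ) ∣ t₀ + (-((a / g : ℕ) : ℤ)) * 0
                · by_cases h1p : (p : ℤ) ∣ s₀ + ((b / g : ℕ) : ℤ) * 1
                  · refine ⟨2, ?_, ?_⟩
                    · intro hd'
                      have := keyP 2 1 hd' h1p
                      rw [show (2 : ℤ) - 1 = 1 from by ring] at this
                      exact hp1 this
                    · intro hd'
                      have := keyQ 2 0 hd' h0q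
                      rw [show (2 : ℤ) - 0 = 2 from by ring] at this
                      exact hp2' this
                  · refine ⟨1, h1p, ?_⟩
                    intro hd'
                    have := keyQ 1 0 hd' h0q
                    rw [show (1 : ℤ) - 0 = 1 from by ring] at this
                    exact hp1 this
                · exact ⟨0, h0, h0q⟩
      obtain ⟨k, hkP, hkQ⟩ := av s₀ ((b / g : ℕ) : ℤ) t₀ (-((a / g : ℕ) : ℤ)) (n / g) hn'pos hprimes
      set s : ℤ := s₀ + ((b / g : ℕ) : ℤ) * k with hs
      set t : ℤ := t₀ + (-((a / g : ℕ) : ℤ)) * k with ht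
      have hsum : ((a / g : ℕ) : ℤ) * s + ((b / g : ℕ) : ℤ) * t = (d : ℤ) := by
        rw [hs, ht]; linear_combination hsum₀
      have hna : (n / a) ∣ (n / g) := by
        have h1 : n / a = (n / g) / (a / g) := by
          rw [Nat.div_div_eq_div_mul, Nat.mul_div_cancel' hga]
        rw [h1]
        exact Nat.div_dvd_of_dvd ha'
      have hnb : (n / b) ∣ (n / g) := by
        have h1 : n / b = (n / g) / (b / g) := by
          rw [Nat.div_div_eq_div_mul, Nat.mul_div_cancel' hgb]
        rw [h1]
        exact Nat.div_dvd_of_dvd hb'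
      have hsa : IsCoprime s ((n / a : ℕ) : ℤ) :=
        IsCoprime.of_isCoprime_of_dvd_right hkP (Int.natCast_dvd_natCast.mpr hna)
      have htb : IsCoprime t ((n / b : ℕ) : ℤ) :=
        IsCoprime.of_isCoprime_of_dvd_right hkQ (Int.natCast_dvd_natCast.mpr hnb)
      obtain ⟨S, hS⟩ := lift_unit ha s hsa
      obtain ⟨T, hT⟩ := lift_unit hb t htb
      obtain ⟨W, hW⟩ := lift_unit hgdn (w : ℤ) (Nat.isCoprime_iff_coprime.mpr hwcop)
      refine ⟨(a : ZMod n) * ↑(S * W), (b : ZMod n) * ↑(T * W), ?_, ?_, ?_⟩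
      · rw [mul_comm]
        exact zmult_unit_mul (S * W) (a : ZMod n)
      · rw [mul_comm]
        exact zmult_unit_mul (T * W) (b : ZMod n)
      · have hcast : (a : ZMod n) * ((s : ℤ) : ZMod n) + (b : ZMod n) * ((t : ℤ) : ZMod n) =
            ((g * d : ℕ) : ZMod n) := by
          have ha2 : (a : ℤ) = (g : ℤ) * ((a / g : ℕ) : ℤ) := by
            exact_mod_cast (Nat.mul_div_cancel' hga).symm
          have hb2 : (b : ℤ) = (g : ℤ) * ((b / g : ℕ) : ℤ) := by
            exact_mod_cast (Nat.mul_div_cancel' hgb).symm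
          have h1 : ((a : ℕ) : ℤ) * s + ((b : ℕ) : ℤ) * t = ((g * d : ℕ) : ℤ) := by
            push_cast
            rw [ha2, hb2]
            linear_combination (g : ℤ) * hsum
          calc (a : ZMod n) * ((s : ℤ) : ZMod n) + (b : ZMod n) * ((t : ℤ) : ZMod n)
              = ((((a : ℕ) : ℤ) * s + ((b : ℕ) : ℤ) * t : ℤ) : ZMod n) := by push_cast; ring
            _ = ((g * d : ℕ) : ZMod n) := by rw [h1]; push_cast; ring
        have hfin : ((g * d : ℕ) : ZMod n) * (((w : ℕ) : ℤ) : ZMod n) = c := by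
          have h1 : (((w : ℕ) : ℤ) : ZMod n) = ((w : ℕ) : ZMod n) := by push_cast; ring
          rw [h1, ← Nat.cast_mul, hwmul, ZMod.natCast_zmod_val]
        calc (a : ZMod n) * ↑(S * W) + (b : ZMod n) * ↑(T * W)
            = ((a : ZMod n) * ↑S) * ↑W + ((b : ZMod n) * ↑T) * ↑W := by
              rw [Units.val_mul, Units.val_mul]; ring
          _ = ((a : ZMod n) * ((s : ℤ) : ZMod n) + (b : ZMod n) * ((t : ℤ) : ZMod n)) * ↑W := by
              rw [hS, hT]; ring
          _ = ((g * d : ℕ) : ZMod n) * ↑W := by rw [hcast]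
          _ = ((g * d : ℕ) : ZMod n) * (((w : ℕ) : ℤ) : ZMod n) := hW
          _ = c := hfin
  · -- disjointness
    intro d₁ d₂ h₁ he₁ h₂ he₂ hne
    rw [Set.disjoint_left]
    intro z hz1 hz2
    simp only [Set.mem_setOf_eq] at hz1 hz2
    exact hne (Nat.eq_of_mul_eq_mul_left hg0
      (zmult_inj (hgd_dvd_n d₁ h₁) (hgd_dvd_n d₂ h₂) (hz1.symm.trans hz2)))
end
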